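/- Let Δ be a flag complex and let r ≥ k > p > 0 be integers. If f_{k-1}(Δ) < C(r+1,k), then f_{p-1}(Δ) ≥ C(r,p) · C(r,k)^{-p/k} · (f_{k-1}(Δ))^{p/k}, where C(a,b) denotes the binomial coefficient and the inequality is between real numbers. -/

import Mathlib

set_option maxHeartbeats 1000000
set_option linter.unusedSectionVars false


/-- The number of faces of `Δ` with exactly `i` vertices (i.e. `f_{i-1}(Δ)`). -/
def faceCount {V : Type*} [DecidableEq V] (Δ : Finset (Finset V)) (i : ℕ) : ℕ :=
  (Δ.filter fun s => s.card = i).card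

/-- A flag complex: every finite set of vertices all of whose 2-element subsets
are faces is itself a face. -/
def IsFlag {V : Type*} [DecidableEq V] (Δ : Finset (Finset V)) : Prop :=
  ∀ S : Finset V, (∀ v ∈ S, ({v} : Finset V) ∈ Δ) →
    (∀ a ∈ S, ∀ b ∈ S, a ≠ b → ({a, b} : Finset V) ∈ Δ) → S ∈ Δ

namespace FRproof

open Finset Real

variable {V : Type*} [DecidableEq V]

/-- faces of cardinality `i` -/
def lvl (Δ : Finset (Finset V)) (i : ℕ) : Finset (Finset V) := Δ.filter fun s => s.card = i

/-- number of `k`-faces containing `A` -/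
def ec (Δ : Finset (Finset V)) (k : ℕ) (A : Finset V) : ℕ :=
  ((lvl Δ k).filter fun K => A ⊆ K).card

lemma mem_lvl {Δ : Finset (Finset V)} {i : ℕ} {A : Finset V} :
    A ∈ lvl Δ i ↔ A ∈ Δ ∧ A.card = i := by simp [lvl]

lemma ec_anti {Δ : Finset (Finset V)} {k : ℕ} {A B : Finset V} (h : A ⊆ B) :
    ec Δ k B ≤ ec Δ k A := by
  apply Finset.card_le_card
  exact Finset.filter_subset_filter _ (by rfl) |>.trans (by
    intro K hK
    simp only [Finset.mem_filter] at *
    exact ⟨hK.1, h.trans hK.2⟩)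

lemma mem_of_ec_pos {Δ : Finset (Finset V)} {k : ℕ} {A : Finset V}
    (hΔ : ∀ B ∈ Δ, ∀ A ⊆ B, A ∈ Δ) (h : 0 < ec Δ k A) : A ∈ Δ := by
  obtain ⟨K, hK⟩ := Finset.card_pos.mp h
  simp only [Finset.mem_filter, mem_lvl] at hK
  exact hΔ K hK.1.1 A hK.2

lemma ec_empty (Δ : Finset (Finset V)) (k : ℕ) : ec Δ k ∅ = faceCount Δ k := by
  simp [ec, faceCount, lvl]

/-- the log-sum inequality -/
lemma logSum {ι : Type*} (t : Finset ι) (a b : ι → ℝ)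
    (ha : ∀ x ∈ t, 0 ≤ a x) (hb : ∀ x ∈ t, 0 < b x) :
    (∑ x ∈ t, a x) * Real.log ((∑ x ∈ t, a x) / (∑ x ∈ t, b x)) ≤
      ∑ x ∈ t, a x * Real.log (a x / b x) := by
  rcases t.eq_empty_or_nonempty with rfl | hne
  · simp
  set A := ∑ x ∈ t, a x with hA
  set B := ∑ x ∈ t, b x with hB
  have hBpos : 0 < B := Finset.sum_pos hb hne
  have hAnn : 0 ≤ A := Finset.sum_nonneg ha
  rcases eq_or_lt_of_le hAnn with hA0 | hApos
  · -- A = 0, so all a x = 0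
    have hall : ∀ x ∈ t, a x = 0 := by
      intro x hx
      have := (Finset.sum_eq_zero_iff_of_nonneg ha).mp hA0.symm
      exact this x hx
    rw [← hA0]
    have : ∑ x ∈ t, a x * Real.log (a x / b x) = 0 :=
      Finset.sum_eq_zero fun x hx => by rw [hall x hx, zero_mul]
    simp [this]
  · -- termwise tangent bound
    have key : ∀ x ∈ t, a x * Real.log (A / B) + a x - (A / B) * b x
        ≤ a x * Real.log (a x / b x) := by
      intro x hx
      rcases eq_or_lt_of_le (ha x hx) with h0 | hax
      · rw [← h0]
        simp only [zero_mul, zero_add, zero_sub, neg_le]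
        have : 0 ≤ (A / B) * b x := mul_nonneg (by positivity) (hb x hx).le
        linarith
      · have hbx := hb x hx
        have hy : 0 < a x * B / (b x * A) := by positivity
        have hlog : Real.log (a x * B / (b x * A)) ≥ 1 - (b x * A) / (a x * B) := by
          have h1 : Real.log ((a x * B / (b x * A))⁻¹) ≤ (a x * B / (b x * A))⁻¹ - 1 :=
            Real.log_le_sub_one_of_pos (by positivity)
          rw [Real.log_inv] at h1
          have : (a x * B / (b x * A))⁻¹ = (b x * A) / (a x * B) := by
            field_simp
          rw [this] at h1
          linarith
        have hsplit : Real.log (a x / b x) - Real.log (A / B)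
            = Real.log (a x * B / (b x * A)) := by
          rw [Real.log_div (by positivity) (by positivity),
              Real.log_div (by positivity) (by positivity),
              Real.log_div (by positivity) (by positivity),
              Real.log_mul (by positivity) (by positivity),
              Real.log_mul (by positivity) (by positivity)]
          ring
        have : a x * (Real.log (a x / b x) - Real.log (A / B))
            ≥ a x * (1 - (b x * A) / (a x * B)) := by
          apply mul_le_mul_of_nonneg_left _ hax.le
          rw [← hsplit] at hlog
          linarith
        have harith : a x * (1 - (b x * A) / (a x * B)) = a x - (A / B) * b x := by
          field_simp
        nlinarith [this, harith]
    have hsum : ∑ x ∈ t, (a x * Real.log (A / B) + a x - (A / B) * b x)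
        = A * Real.log (A / B) + A - (A / B) * B := by
      rw [Finset.sum_sub_distrib, Finset.sum_add_distrib, ← Finset.sum_mul, ← Finset.mul_sum]
    have hAB : (A / B) * B = A := by field_simp
    calc A * Real.log (A / B)
        = ∑ x ∈ t, (a x * Real.log (A / B) + a x - (A / B) * b x) := by
          rw [hsum, hAB]; ring
      _ ≤ ∑ x ∈ t, a x * Real.log (a x / b x) := Finset.sum_le_sum key



open Finset Real

section MS

variable {ι : Type*} [DecidableEq ι] (adj : ι → ι → Prop) [DecidableRel adj]

noncomputable def SP (I : Finset ι) (q : ι → ℝ) : ℝ :=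
  ∑ x ∈ I, ∑ y ∈ I, if adj x y then q x * q y else 0

lemma SP_erase (hsymm : ∀ x y, adj x y → adj y x) (hirr : ∀ x, ¬ adj x x)
    (I : Finset ι) (q : ι → ℝ) (u : ι) (hu : u ∈ I) :
    SP adj I q = SP adj (I.erase u) q
      + 2 * q u * ∑ w ∈ I.erase u, (if adj u w then q w else 0) := by
  have hrow : ∀ x, ∑ y ∈ I, (if adj x y then q x * q y else 0)
      = (if adj x u then q x * q u else 0) + ∑ y ∈ I.erase u, (if adj x y then q x * q y else 0) :=
    fun x => (Finset.add_sum_erase I _ hu).symm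
  have h1 : SP adj I q = ∑ x ∈ I, ((if adj x u then q x * q u else 0)
      + ∑ y ∈ I.erase u, (if adj x y then q x * q y else 0)) := by
    unfold SP; exact Finset.sum_congr rfl fun x _ => hrow x
  rw [h1, Finset.sum_add_distrib]
  have h2 : ∑ x ∈ I, (if adj x u then q x * q u else 0)
      = q u * ∑ w ∈ I.erase u, (if adj u w then q w else 0) := by
    rw [← Finset.add_sum_erase I _ hu]
    have : (if adj u u then q u * q u else 0) = 0 := by simp [hirr u]
    rw [this, zero_add, Finset.mul_sum]
    refine Finset.sum_congr rfl fun x hx => ?_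
    have : adj x u ↔ adj u x := ⟨hsymm x u, hsymm u x⟩
    split_ifs with h h'
    · ring
    · exact absurd (this.mp h) h'
    · exact absurd (this.mpr ‹adj u x›) ‹¬adj x u›
    · ring
  have h3 : ∑ x ∈ I, ∑ y ∈ I.erase u, (if adj x y then q x * q y else 0)
      = (∑ y ∈ I.erase u, (if adj u y then q u * q y else 0))
        + SP adj (I.erase u) q := by
    rw [← Finset.add_sum_erase I _ hu]; rfl
  have h4 : ∑ y ∈ I.erase u, (if adj u y then q u * q y else 0)
      = q u * ∑ w ∈ I.erase u, (if adj u w then q w else 0) := by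
    rw [Finset.mul_sum]
    refine Finset.sum_congr rfl fun x hx => ?_
    split_ifs <;> ring
  rw [h2, h3, h4]; ring

lemma MS_aux (hsymm : ∀ x y, adj x y → adj y x) (hirr : ∀ x, ¬ adj x x)
    (s : ℕ) (hs : 1 ≤ s) :
    ∀ (n : ℕ) (I : Finset ι), I.card ≤ n →
      (∀ T ⊆ I, (∀ x ∈ T, ∀ y ∈ T, x ≠ y → adj x y) → T.card ≤ s) →
      ∀ (q : ι → ℝ), (∀ x, 0 ≤ q x) →
      SP adj I q ≤ (1 - 1/(s:ℝ)) * (∑ x ∈ I, q x)^2 := by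
  intro n
  induction n with
  | zero =>
    intro I hI hcl q hq
    have : I = ∅ := Finset.card_eq_zero.mp (Nat.le_zero.mp hI)
    subst this; simp [SP]
  | succ n ih =>
    intro I hI hcl q hq
    by_cases hex : ∃ u ∈ I, ∃ v ∈ I, u ≠ v ∧ ¬ adj u v
    · obtain ⟨u, hu, v, hv, huv, hnadj⟩ := hex
      have key : ∀ (u v : ι), u ∈ I → v ∈ I → u ≠ v → ¬ adj u v →
          ((∑ w ∈ (I.erase u).erase v, if adj u w then q w else 0)
            ≤ ∑ w ∈ (I.erase u).erase v, if adj v w then q w else 0) →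
          SP adj I q ≤ (1 - 1/(s:ℝ)) * (∑ x ∈ I, q x)^2 := by
        clear huv hnadj hu hv u v
        intro u v hu hv huv hnadj hL
        set J := (I.erase u).erase v with hJdef
        set Lu := ∑ w ∈ J, (if adj u w then q w else 0) with hLu
        set Lv := ∑ w ∈ J, (if adj v w then q w else 0) with hLv
        have hvI : v ∈ I.erase u := Finset.mem_erase.mpr ⟨Ne.symm huv, hv⟩
        set q' : ι → ℝ := Function.update q v (q u + q v) with hq'def
        have hq'nn : ∀ x, 0 ≤ q' x := by
          intro x
          by_cases hx : x = v
          · rw [hq'def, hx, Function.update_self]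
            exact add_nonneg (hq u) (hq v)
          · simp [hq'def, Function.update_of_ne hx]; exact hq x
        have hq'J : ∀ w ∈ J, q' w = q w := by
          intro w hw
          have : w ≠ v := (Finset.mem_erase.mp hw).1
          simp [hq'def, Function.update_of_ne this]
        -- decompositions
        have d1 : SP adj I q = SP adj (I.erase u) q + 2 * q u * Lu := by
          rw [SP_erase adj hsymm hirr I q u hu]
          congr 1
          rw [← Finset.add_sum_erase (I.erase u) _ hvI]
          have : (if adj u v then q v else 0) = 0 := by simp [hnadj]
          rw [this, zero_add]
        have d2 : SP adj (I.erase u) q = SP adj J q + 2 * q v * Lv := by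
          rw [SP_erase adj hsymm hirr (I.erase u) q v hvI]
        have d3 : SP adj (I.erase u) q' = SP adj J q + 2 * (q u + q v) * Lv := by
          rw [SP_erase adj hsymm hirr (I.erase u) q' v hvI]
          congr 1
          · unfold SP
            refine Finset.sum_congr rfl fun x hx => Finset.sum_congr rfl fun y hy => ?_
            rw [hq'J x hx, hq'J y hy]
          · rw [hq'def]
            simp only [Function.update_self]
            congr 1
            refine Finset.sum_congr rfl fun w hw => ?_
            have : w ≠ v := (Finset.mem_erase.mp hw).1
            simp [Function.update_of_ne this]
        have hqsum : ∑ x ∈ I.erase u, q' x = ∑ x ∈ I, q x := by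
          rw [← Finset.add_sum_erase (I.erase u) q' hvI, ← Finset.add_sum_erase I q hu,
            ← Finset.add_sum_erase (I.erase u) q hvI]
          have h1 : q' v = q u + q v := by simp [hq'def]
          have h2 : ∑ w ∈ J, q' w = ∑ w ∈ J, q w := Finset.sum_congr rfl hq'J
          rw [h1, h2]; ring
        have hcard : (I.erase u).card ≤ n := by
          have := Finset.card_erase_of_mem hu
          omega
        have hstep : SP adj I q ≤ SP adj (I.erase u) q' := by
          rw [d1, d2, d3]
          have : q u * Lu ≤ q u * Lv := mul_le_mul_of_nonneg_left hL (hq u)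
          nlinarith
        calc SP adj I q ≤ SP adj (I.erase u) q' := hstep
          _ ≤ (1 - 1/(s:ℝ)) * (∑ x ∈ I.erase u, q' x)^2 :=
              ih (I.erase u) hcard
                (fun T hT => hcl T (hT.trans (Finset.erase_subset _ _))) q' hq'nn
          _ = (1 - 1/(s:ℝ)) * (∑ x ∈ I, q x)^2 := by rw [hqsum]
      rcases le_total (∑ w ∈ (I.erase u).erase v, if adj u w then q w else 0)
          (∑ w ∈ (I.erase u).erase v, if adj v w then q w else 0) with h | h
      · exact key u v hu hv huv hnadj h
      · refine key v u hv hu (Ne.symm huv) (fun ha => hnadj (hsymm _ _ ha)) ?_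
        have hcomm : (I.erase v).erase u = (I.erase u).erase v := by
          ext x; simp only [Finset.mem_erase]; tauto
        rw [hcomm]
        exact h
    · -- clique case
      push_neg at hex
      have hpair : ∀ x ∈ I, ∀ y ∈ I, x ≠ y → adj x y := fun x hx y hy hxy =>
        of_not_not (fun h => by exact absurd (hex x hx y hy) (by simp [hxy, h]))
      have hcard : I.card ≤ s := hcl I (Finset.Subset.refl I) hpair
      rcases Finset.eq_empty_or_nonempty I with rfl | hne
      · simp [SP]
      have hIpos : 0 < (I.card : ℝ) := by
        have := Finset.card_pos.mpr hne; positivity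
      have hbound : SP adj I q ≤ (∑ x ∈ I, q x)^2 - ∑ x ∈ I, (q x)^2 := by
        have h1 : SP adj I q ≤ ∑ x ∈ I, ∑ y ∈ I, (if x = y then 0 else q x * q y) := by
          unfold SP
          refine Finset.sum_le_sum fun x hx => Finset.sum_le_sum fun y hy => ?_
          by_cases hxy : x = y
          · subst hxy; simp [hirr x]
          · simp only [if_neg hxy]
            split_ifs
            · exact le_refl _
            · exact mul_nonneg (hq x) (hq y)
        have h2 : ∑ x ∈ I, ∑ y ∈ I, (if x = y then 0 else q x * q y)
            = (∑ x ∈ I, q x)^2 - ∑ x ∈ I, (q x)^2 := by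
          have hrow2 : ∀ x ∈ I, ∑ y ∈ I, (if x = y then 0 else q x * q y)
              = (∑ y ∈ I, q x * q y) - q x * q x := by
            intro x hx
            have h' : ∑ y ∈ I, (if x = y then 0 else q x * q y)
                = ∑ y ∈ I, (q x * q y - if x = y then q x * q y else 0) := by
              refine Finset.sum_congr rfl fun y _ => ?_
              split_ifs <;> ring
            have h'' : ∑ y ∈ I, (if x = y then q x * q y else 0) = q x * q x := by
              rw [Finset.sum_ite_eq I x (fun y => q x * q y), if_pos hx]
            rw [h', Finset.sum_sub_distrib, h'']
          rw [Finset.sum_congr rfl hrow2, Finset.sum_sub_distrib]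
          congr 1
          · rw [sq, Finset.sum_mul]
            exact Finset.sum_congr rfl fun x _ => by rw [Finset.mul_sum]
          · exact Finset.sum_congr rfl fun x _ => (pow_two (q x)).symm
        rw [← h2]; exact h1
      have hCS : (∑ x ∈ I, q x)^2 ≤ (I.card : ℝ) * ∑ x ∈ I, (q x)^2 := by
        exact_mod_cast sq_sum_le_card_mul_sum_sq (s := I) (f := q)
      have hfrac : 1/(s:ℝ) ≤ 1/(I.card:ℝ) := by
        apply one_div_le_one_div_of_le hIpos
        exact_mod_cast hcard
      have hsq : (0:ℝ) ≤ (∑ x ∈ I, q x)^2 := sq_nonneg _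
      have : (∑ x ∈ I, (q x)^2) ≥ (∑ x ∈ I, q x)^2 / I.card := by
        rw [ge_iff_le, div_le_iff₀ hIpos]
        linarith [hCS]
      calc SP adj I q ≤ (∑ x ∈ I, q x)^2 - ∑ x ∈ I, (q x)^2 := hbound
        _ ≤ (∑ x ∈ I, q x)^2 - (∑ x ∈ I, q x)^2 / I.card := by linarith
        _ = (1 - 1/(I.card:ℝ)) * (∑ x ∈ I, q x)^2 := by field_simp
        _ ≤ (1 - 1/(s:ℝ)) * (∑ x ∈ I, q x)^2 := by nlinarith [hfrac, hsq]

lemma MS (hsymm : ∀ x y, adj x y → adj y x) (hirr : ∀ x, ¬ adj x x)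
    (s : ℕ) (hs : 1 ≤ s) (I : Finset ι)
    (hcl : ∀ T ⊆ I, (∀ x ∈ T, ∀ y ∈ T, x ≠ y → adj x y) → T.card ≤ s)
    (q : ι → ℝ) (hq : ∀ x, 0 ≤ q x) :
    SP adj I q ≤ (1 - 1/(s:ℝ)) * (∑ x ∈ I, q x)^2 :=
  MS_aux adj hsymm hirr s hs I.card I le_rfl hcl q hq

end MS



open Finset Real

variable {V : Type*} [DecidableEq V]


/-- swap order of summation over a dependent filter -/
lemma swapsum {α β : Type*} [DecidableEq α] [DecidableEq β] (s : Finset α) (t : Finset β)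
    (P : α → β → Prop) [∀ a b, Decidable (P a b)] (f : α → β → ℝ) :
    ∑ a ∈ s, ∑ b ∈ t.filter (fun b => P a b), f a b
      = ∑ b ∈ t, ∑ a ∈ s.filter (fun a => P a b), f a b := by
  simp_rw [Finset.sum_filter]
  exact Finset.sum_comm

/-- the faces of cardinality `j` inside a face `B` are exactly the `j`-subsets of `B` -/
lemma lvl_filter_eq_powersetCard {Δ : Finset (Finset V)}
    (hΔ : ∀ B ∈ Δ, ∀ A ⊆ B, A ∈ Δ) {B : Finset V} (hB : B ∈ Δ) (j : ℕ) :
    (lvl Δ j).filter (fun A => A ⊆ B) = B.powersetCard j := by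
  ext A
  simp only [Finset.mem_filter, mem_lvl, Finset.mem_powersetCard]
  exact ⟨fun h => ⟨h.2, h.1.2⟩, fun h => ⟨⟨hΔ B hB A h.1, h.2⟩, h.1⟩⟩

/-- Master double-counting lemma -/
lemma CL {Δ : Finset (Finset V)} (hΔ : ∀ B ∈ Δ, ∀ A ⊆ B, A ∈ Δ) {k c j : ℕ}
    (hcj : c ≤ j) (hjk : j ≤ k) (C : Finset V) (hC : C.card = c) :
    ∑ B ∈ (lvl Δ j).filter (fun B => C ⊆ B), ec Δ k B
      = (k - c).choose (j - c) * ec Δ k C := by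
  have step1 : ∑ B ∈ (lvl Δ j).filter (fun B => C ⊆ B), ec Δ k B
      = ∑ B ∈ lvl Δ j, ∑ K ∈ lvl Δ k, (if C ⊆ B ∧ B ⊆ K then 1 else 0) := by
    rw [Finset.sum_filter]
    refine Finset.sum_congr rfl fun B _ => ?_
    by_cases h : C ⊆ B
    · simp only [h, if_true, true_and, ec, Finset.card_filter]
    · simp [h]
  have step2 : ∑ B ∈ lvl Δ j, ∑ K ∈ lvl Δ k, (if C ⊆ B ∧ B ⊆ K then 1 else 0)
      = ∑ K ∈ lvl Δ k, ∑ B ∈ lvl Δ j, (if C ⊆ B ∧ B ⊆ K then 1 else 0) :=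
    Finset.sum_comm
  have inner : ∀ K ∈ lvl Δ k, ∑ B ∈ lvl Δ j, (if C ⊆ B ∧ B ⊆ K then 1 else 0)
      = if C ⊆ K then (k - c).choose (j - c) else 0 := by
    intro K hK
    rw [mem_lvl] at hK
    by_cases hCK : C ⊆ K
    · rw [if_pos hCK, ← Finset.card_filter]
      have : (lvl Δ j).filter (fun B => C ⊆ B ∧ B ⊆ K)
          = ((K \ C).powersetCard (j - c)).image (fun D => D ∪ C) := by
        ext B
        simp only [Finset.mem_filter, mem_lvl, Finset.mem_image, Finset.mem_powersetCard]
        constructor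
        · rintro ⟨⟨hBΔ, hBcard⟩, hCB, hBK⟩
          refine ⟨B \ C, ⟨Finset.sdiff_subset_sdiff hBK le_rfl.subset, ?_⟩, ?_⟩
          · rw [Finset.card_sdiff_of_subset hCB, hBcard, hC]
          · rw [Finset.sdiff_union_of_subset hCB]
        · rintro ⟨D, ⟨hDK, hDcard⟩, rfl⟩
          have hdisj : Disjoint D C := by
            have := hDK.trans (Finset.sdiff_subset)
            exact Finset.disjoint_left.mpr fun a haD haC =>
              (Finset.mem_sdiff.mp (hDK haD)).2 haC
          have hsubK : D ∪ C ⊆ K := Finset.union_subset (hDK.trans Finset.sdiff_subset) hCK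
          refine ⟨⟨hΔ K hK.1 _ hsubK, ?_⟩, Finset.subset_union_right, hsubK⟩
          rw [Finset.card_union_of_disjoint hdisj, hDcard, hC]
          omega
      rw [this, Finset.card_image_of_injOn, Finset.card_powersetCard,
        Finset.card_sdiff_of_subset hCK, hK.2, hC]
      intro D1 h1 D2 h2 heq
      simp only [Finset.mem_coe, Finset.mem_powersetCard] at h1 h2
      have d1 : Disjoint D1 C := Finset.disjoint_left.mpr fun a haD haC =>
        (Finset.mem_sdiff.mp (h1.1 haD)).2 haC
      have d2 : Disjoint D2 C := Finset.disjoint_left.mpr fun a haD haC =>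
        (Finset.mem_sdiff.mp (h2.1 haD)).2 haC
      have heq' : D1 ∪ C = D2 ∪ C := heq
      calc D1 = (D1 ∪ C) \ C := by rw [Finset.union_sdiff_cancel_right d1]
        _ = (D2 ∪ C) \ C := by rw [heq']
        _ = D2 := by rw [Finset.union_sdiff_cancel_right d2]
    · rw [if_neg hCK]
      apply Finset.sum_eq_zero
      intro B hB
      rw [if_neg]
      rintro ⟨hCB, hBK⟩
      exact hCK (hCB.trans hBK)
  have step3 : ∑ K ∈ lvl Δ k, ∑ B ∈ lvl Δ j, (if C ⊆ B ∧ B ⊆ K then 1 else 0)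
      = (k - c).choose (j - c) * ec Δ k C := by
    rw [Finset.sum_congr rfl inner, ← Finset.sum_filter, Finset.sum_const, smul_eq_mul, ec,
      mul_comm]
  rw [step1, step2, step3]




lemma choose_c_two (c : ℕ) : (c+2).choose c * 2 = (c+2)*(c+1) := by
  have h1 : (c+2).choose c = (c+2).choose 2 := by
    have := Nat.choose_symm (n := c+2) (k := c) (by omega)
    have h2 : c + 2 - c = 2 := by omega
    rw [h2] at this
    exact this.symm
  have h2 : (c+2).descFactorial 2 = (c+2)*(c+1) := by
    rw [Nat.descFactorial_succ, Nat.descFactorial_one]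
    have : c + 2 - 1 = c + 1 := by omega
    rw [this]
    ring
  have h3 := Nat.descFactorial_eq_factorial_mul_choose (c+2) 2
  have hf : Nat.factorial 2 = 2 := rfl
  rw [h1, ← h2, h3, hf]
  ring

lemma HB1 (B : Finset V) (c : ℕ) (hB : B.card = c + 2) (x : ℝ) :
    ∑ A ∈ B.powersetCard c, ∑ w ∈ B \ A, x = (((c+2)*(c+1) : ℕ) : ℝ) * x := by
  have hA : ∀ A ∈ B.powersetCard c, ∑ w ∈ B \ A, x = 2 * x := by
    intro A hA
    rw [Finset.mem_powersetCard] at hA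
    rw [Finset.sum_const, Finset.card_sdiff_of_subset hA.1, hB, hA.2]
    have : c + 2 - c = 2 := by omega
    rw [this]
    simp [two_smul, two_mul]
  rw [Finset.sum_congr rfl hA, Finset.sum_const, Finset.card_powersetCard, hB, nsmul_eq_mul,
    ← choose_c_two c]
  push_cast
  ring

lemma HB2 (B : Finset V) (c : ℕ) (hB : B.card = c + 2) (F : Finset V → ℝ) :
    ∑ A ∈ B.powersetCard c, ∑ w ∈ B \ A, F (insert w A)
      = ((c+1 : ℕ) : ℝ) * ∑ C ∈ B.powersetCard (c+1), F C := by
  have lhs : ∑ A ∈ B.powersetCard c, ∑ w ∈ B \ A, F (insert w A)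
      = ∑ x ∈ (B.powersetCard c).sigma (fun A => B \ A), F (insert x.2 x.1) := by
    rw [Finset.sum_sigma]
  have rhs : ∑ x ∈ (B.powersetCard (c+1)).sigma (fun C => C), F x.1
      = ((c+1 : ℕ) : ℝ) * ∑ C ∈ B.powersetCard (c+1), F C := by
    rw [Finset.sum_sigma, Finset.mul_sum]
    refine Finset.sum_congr rfl fun C hC => ?_
    rw [Finset.mem_powersetCard] at hC
    have hconst : ∑ w ∈ C, F ((⟨C, w⟩ : (_ : Finset V) × V)).1 = ∑ w ∈ C, F C :=
      Finset.sum_congr rfl fun _ _ => rfl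
    rw [hconst, Finset.sum_const, hC.2, nsmul_eq_mul]
  rw [lhs, ← rhs]
  refine Finset.sum_nbij' (fun x => ⟨insert x.2 x.1, x.2⟩) (fun x => ⟨x.1.erase x.2, x.2⟩)
    ?_ ?_ ?_ ?_ ?_
  · rintro ⟨A, w⟩ hx
    simp only [Finset.mem_sigma, Finset.mem_powersetCard, Finset.mem_sdiff] at hx ⊢
    obtain ⟨⟨hAB, hAc⟩, hwB, hwA⟩ := hx
    refine ⟨⟨Finset.insert_subset hwB hAB, ?_⟩, Finset.mem_insert_self _ _⟩
    rw [Finset.card_insert_of_notMem hwA, hAc]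
  · rintro ⟨C, w⟩ hx
    simp only [Finset.mem_sigma, Finset.mem_powersetCard, Finset.mem_sdiff] at hx ⊢
    obtain ⟨⟨hCB, hCc⟩, hwC⟩ := hx
    refine ⟨⟨(Finset.erase_subset _ _).trans hCB, ?_⟩, hCB hwC, Finset.notMem_erase _ _⟩
    rw [Finset.card_erase_of_mem hwC, hCc]
    omega
  · rintro ⟨A, w⟩ hx
    simp only [Finset.mem_sigma, Finset.mem_sdiff] at hx
    simp only [Finset.erase_insert hx.2.2]
  · rintro ⟨C, w⟩ hx
    simp only [Finset.mem_sigma] at hx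
    simp only [Finset.insert_erase hx.2]
  · rintro ⟨A, w⟩ _
    rfl

lemma HB3 (B : Finset V) (c : ℕ) (hB : B.card = c + 2) (F : Finset V → ℝ) :
    ∑ A ∈ B.powersetCard c, ∑ w ∈ B \ A, F (B.erase w)
      = ((c+1 : ℕ) : ℝ) * ∑ C ∈ B.powersetCard (c+1), F C := by
  have step1 : ∑ A ∈ B.powersetCard c, ∑ w ∈ B \ A, F (B.erase w)
      = ∑ w ∈ B, ∑ A ∈ B.powersetCard c, (if w ∉ A then F (B.erase w) else 0) := by
    rw [Finset.sum_comm]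
    refine Finset.sum_congr rfl fun A hA => ?_
    rw [Finset.sdiff_eq_filter, Finset.sum_filter]
  have step2 : ∀ w ∈ B, ∑ A ∈ B.powersetCard c, (if w ∉ A then F (B.erase w) else 0)
      = ((c+1:ℕ) : ℝ) * F (B.erase w) := by
    intro w hw
    rw [← Finset.sum_filter, Finset.sum_const, nsmul_eq_mul]
    congr 1
    norm_cast
    have hfil : (B.powersetCard c).filter (fun A => w ∉ A) = (B.erase w).powersetCard c := by
      ext A
      simp only [Finset.mem_filter, Finset.mem_powersetCard, Finset.subset_erase]
      tauto
    rw [hfil, Finset.card_powersetCard, Finset.card_erase_of_mem hw, hB]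
    have h21 : c + 2 - 1 = c + 1 := by omega
    rw [h21]
    exact Nat.choose_succ_self_right c
  have step3 : ∑ w ∈ B, F (B.erase w) = ∑ C ∈ B.powersetCard (c+1), F C := by
    refine Finset.sum_bij (fun w _ => B.erase w) ?_ ?_ ?_ ?_
    · intro w hw
      rw [Finset.mem_powersetCard]
      constructor
      · exact Finset.erase_subset _ _
      · rw [Finset.card_erase_of_mem hw, hB]
        omega
    · intro w1 h1 w2 h2 heq
      have heq' : B.erase w1 = B.erase w2 := heq
      by_contra hne
      have hmem : w1 ∈ B.erase w2 := Finset.mem_erase.mpr ⟨hne, h1⟩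
      rw [← heq'] at hmem
      exact (Finset.notMem_erase w1 B) hmem
    · intro C hC
      rw [Finset.mem_powersetCard] at hC
      have hcard : (B \ C).card = 1 := by
        rw [Finset.card_sdiff_of_subset hC.1, hB, hC.2]
        omega
      obtain ⟨w, hw⟩ := Finset.card_eq_one.mp hcard
      have hwB : w ∈ B := by
        have : w ∈ B \ C := hw ▸ Finset.mem_singleton_self w
        exact (Finset.mem_sdiff.mp this).1
      refine ⟨w, hwB, ?_⟩
      show B.erase w = C
      have hBw : B.erase w = B \ {w} := by rw [Finset.sdiff_singleton_eq_erase]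
      rw [hBw, ← hw, Finset.sdiff_sdiff_self_left, Finset.inter_eq_right.mpr hC.1]
    · intro w hw; rfl
  rw [step1, Finset.sum_congr rfl step2, ← Finset.mul_sum, step3]



lemma choose_two_two (d : ℕ) : (d+2).choose 2 * 2 = (d+2)*(d+1) := by
  have h2 : (d+2).descFactorial 2 = (d+2)*(d+1) := by
    rw [Nat.descFactorial_succ, Nat.descFactorial_one]
    have : d + 2 - 1 = d + 1 := by omega
    rw [this]
    ring
  have h3 := Nat.descFactorial_eq_factorial_mul_choose (d+2) 2
  have hf : Nat.factorial 2 = 2 := rfl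
  rw [← h2, h3, hf]
  ring

lemma insert_union_erase {B A : Finset V} {w : V} (hw : w ∈ B) (hA : A ⊆ B) :
    insert w A ∪ B.erase w = B := by
  ext x
  simp only [Finset.mem_union, Finset.mem_insert, Finset.mem_erase]
  constructor
  · rintro ((rfl | hx) | ⟨_, hx⟩)
    · exact hw
    · exact hA hx
    · exact hx
  · intro hx
    by_cases hxw : x = w
    · exact Or.inl (Or.inl hxw)
    · exact Or.inr ⟨hxw, hx⟩

lemma cliquebound {Δ : Finset (Finset V)} {k r : ℕ}
    (hΔ : ∀ B ∈ Δ, ∀ A ⊆ B, A ∈ Δ) (hflag : IsFlag Δ)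
    (hface : ∀ B ∈ Δ, B.card ≤ r)
    {a : ℕ} {A : Finset V} (hA : A ∈ Δ) (hAc : A.card = a) (har : a ≤ r)
    (T : Finset (Finset V))
    (hT : T ⊆ (lvl Δ (a+1)).filter (fun C => A ⊆ C ∧ 0 < ec Δ k C))
    (hadj : ∀ x ∈ T, ∀ y ∈ T, x ≠ y → (x ≠ y ∧ x ∪ y ∈ Δ)) :
    T.card ≤ r - a := by
  classical
  have hTC : ∀ C ∈ T, C ∈ Δ ∧ C.card = a + 1 ∧ A ⊆ C := by
    intro C hC
    have := hT hC
    rw [Finset.mem_filter, mem_lvl] at this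
    exact ⟨this.1.1, this.1.2, this.2.1⟩
  set U := A ∪ T.sup id with hU
  have hCU : ∀ C ∈ T, C ⊆ U := by
    intro C hC
    exact (Finset.le_sup (f := id) hC).trans Finset.subset_union_right
  have hmemU : ∀ v ∈ U, v ∈ A ∨ ∃ C ∈ T, v ∈ C := by
    intro v hv
    rcases Finset.mem_union.mp hv with h | h
    · exact Or.inl h
    · obtain ⟨C, hC, hvC⟩ := Finset.mem_sup.mp h
      exact Or.inr ⟨C, hC, hvC⟩
  have hpair : ∀ x ∈ U, ∀ y ∈ U, ∃ D ∈ Δ, x ∈ D ∧ y ∈ D := by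
    intro x hx y hy
    rcases hmemU x hx with hxA | ⟨Cx, hCx, hxC⟩
    · rcases hmemU y hy with hyA | ⟨Cy, hCy, hyC⟩
      · exact ⟨A, hA, hxA, hyA⟩
      · exact ⟨Cy, (hTC Cy hCy).1, (hTC Cy hCy).2.2 hxA, hyC⟩
    · rcases hmemU y hy with hyA | ⟨Cy, hCy, hyC⟩
      · exact ⟨Cx, (hTC Cx hCx).1, hxC, (hTC Cx hCx).2.2 hyA⟩
      · by_cases hCC : Cx = Cy
        · exact ⟨Cx, (hTC Cx hCx).1, hxC, hCC ▸ hyC⟩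
        · refine ⟨Cx ∪ Cy, (hadj Cx hCx Cy hCy hCC).2, ?_, ?_⟩
          · exact Finset.mem_union_left _ hxC
          · exact Finset.mem_union_right _ hyC
  have hUΔ : U ∈ Δ := by
    apply hflag
    · intro v hv
      obtain ⟨D, hD, hvD, _⟩ := hpair v hv v hv
      exact hΔ D hD {v} (Finset.singleton_subset_iff.mpr hvD)
    · intro x hx y hy hxy
      obtain ⟨D, hD, hxD, hyD⟩ := hpair x hx y hy
      exact hΔ D hD {x, y} (Finset.insert_subset hxD (Finset.singleton_subset_iff.mpr hyD))
  have hUr : U.card ≤ r := hface U hUΔ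
  have hAU : A ⊆ U := Finset.subset_union_left
  have himg : T.image (fun C => C \ A) ⊆ (U \ A).powersetCard 1 := by
    intro D hD
    obtain ⟨C, hC, rfl⟩ := Finset.mem_image.mp hD
    rw [Finset.mem_powersetCard]
    constructor
    · exact Finset.sdiff_subset_sdiff (hCU C hC) le_rfl.subset
    · rw [Finset.card_sdiff_of_subset (hTC C hC).2.2, (hTC C hC).2.1, hAc]
      omega
  have hinj : T.card = (T.image (fun C => C \ A)).card := by
    rw [Finset.card_image_of_injOn]
    intro C1 h1 C2 h2 heq
    have heq' : C1 \ A = C2 \ A := heq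
    have e1 : A ∪ (C1 \ A) = C1 :=
      Finset.union_sdiff_of_subset (hTC C1 (Finset.mem_coe.mp h1)).2.2
    have e2 : A ∪ (C2 \ A) = C2 :=
      Finset.union_sdiff_of_subset (hTC C2 (Finset.mem_coe.mp h2)).2.2
    rw [← e1, ← e2, heq']
  calc T.card = (T.image (fun C => C \ A)).card := hinj
    _ ≤ ((U \ A).powersetCard 1).card := Finset.card_le_card himg
    _ = (U \ A).card.choose 1 := Finset.card_powersetCard 1 _
    _ = (U \ A).card := Nat.choose_one_right _
    _ = U.card - a := by rw [Finset.card_sdiff_of_subset hAU, hAc]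
    _ ≤ r - a := by omega

lemma perA {Δ : Finset (Finset V)} {k r : ℕ}
    (hΔ : ∀ B ∈ Δ, ∀ A ⊆ B, A ∈ Δ) (hflag : IsFlag Δ)
    (hface : ∀ B ∈ Δ, B.card ≤ r)
    (a d m : ℕ) (hk : k = a + 2 + d) (hr : r = a + 2 + d + m)
    (A : Finset V) (hA : A ∈ lvl Δ a) :
    (((d+2)*(d+1) : ℕ) : ℝ) * (ec Δ k A : ℝ) *
        (Real.log (((d+1)*(d+m+2) : ℕ) : ℝ) - Real.log (((d+2)*(d+m+1) : ℕ) : ℝ)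
          - Real.log (ec Δ k A))
      ≤ ∑ B ∈ ((lvl Δ (a+2)).filter (fun B => A ⊆ B ∧ 0 < ec Δ k B)),
          ∑ w ∈ B \ A,
            ((ec Δ k B : ℝ) * Real.log (ec Δ k B)
              - (ec Δ k B : ℝ) * Real.log (ec Δ k (insert w A))
              - (ec Δ k B : ℝ) * Real.log (ec Δ k (B.erase w))) := by
  classical
  have hAm := mem_lvl.mp hA
  by_cases hE0 : ec Δ k A = 0
  · have hfe : (lvl Δ (a+2)).filter (fun B => A ⊆ B ∧ 0 < ec Δ k B) = ∅ := by
      rw [Finset.filter_eq_empty_iff]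
      rintro B hB ⟨hAB, hpos⟩
      have := ec_anti (Δ := Δ) (k := k) hAB
      omega
    rw [hfe, Finset.sum_empty, hE0]
    simp
  have hEpos : 0 < ec Δ k A := Nat.pos_of_ne_zero hE0
  set EB := (lvl Δ (a+2)).filter (fun B => A ⊆ B ∧ 0 < ec Δ k B) with hEB
  set t := EB.sigma (fun B => B \ A) with ht
  -- membership facts
  have hmem : ∀ x ∈ t, x.1 ∈ Δ ∧ x.1.card = a + 2 ∧ A ⊆ x.1 ∧ 0 < ec Δ k x.1
      ∧ x.2 ∈ x.1 ∧ x.2 ∉ A := by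
    intro x hx
    rw [ht, Finset.mem_sigma, hEB, Finset.mem_filter, mem_lvl] at hx
    obtain ⟨⟨⟨h1, h2⟩, h3, h4⟩, h5⟩ := hx
    have h6 := Finset.mem_sdiff.mp h5
    exact ⟨h1, h2, h3, h4, h6.1, h6.2⟩
  set aF : (Σ _ : Finset V, V) → ℝ := fun x => (ec Δ k x.1 : ℝ) with haF
  set bF : (Σ _ : Finset V, V) → ℝ :=
    fun x => (ec Δ k (insert x.2 A) : ℝ) * (ec Δ k (x.1.erase x.2) : ℝ) with hbF
  have haFnn : ∀ x ∈ t, 0 ≤ aF x := fun x _ => by positivity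
  have haFpos : ∀ x ∈ t, 0 < aF x := by
    intro x hx
    have h := (hmem x hx).2.2.2.1
    have h' : (0:ℝ) < (ec Δ k x.1 : ℝ) := by exact_mod_cast h
    exact h'
  have hbFins : ∀ x ∈ t, 0 < ec Δ k (insert x.2 A) := by
    intro x hx
    obtain ⟨h1, h2, h3, h4, h5, h6⟩ := hmem x hx
    have hsub : insert x.2 A ⊆ x.1 := Finset.insert_subset h5 h3
    have := ec_anti (Δ := Δ) (k := k) hsub
    omega
  have hbFers : ∀ x ∈ t, 0 < ec Δ k (x.1.erase x.2) := by
    intro x hx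
    obtain ⟨h1, h2, h3, h4, h5, h6⟩ := hmem x hx
    have hsub : x.1.erase x.2 ⊆ x.1 := Finset.erase_subset _ _
    have := ec_anti (Δ := Δ) (k := k) hsub
    omega
  have hbFpos : ∀ x ∈ t, 0 < bF x := by
    intro x hx
    have h1 := hbFins x hx
    have h2 := hbFers x hx
    rw [hbF]
    have h1' : (0:ℝ) < (ec Δ k (insert x.2 A) : ℝ) := by exact_mod_cast h1
    have h2' : (0:ℝ) < (ec Δ k (x.1.erase x.2) : ℝ) := by exact_mod_cast h2
    positivity
  -- sum of aF
  have hcard2 : ∀ B ∈ EB, (B \ A).card = 2 := by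
    intro B hB
    rw [hEB, Finset.mem_filter, mem_lvl] at hB
    rw [Finset.card_sdiff_of_subset hB.2.1, hB.1.2, hAm.2]
    omega
  have hsum_zero : ∀ j : ℕ, a ≤ j → j ≤ k →
      ∑ B ∈ (lvl Δ j).filter (fun B => A ⊆ B ∧ 0 < ec Δ k B), (ec Δ k B : ℝ)
        = (((k-a).choose (j-a) * ec Δ k A : ℕ) : ℝ) := by
    intro j haj hjk
    have hff : (lvl Δ j).filter (fun B => A ⊆ B ∧ 0 < ec Δ k B)
        = ((lvl Δ j).filter (fun B => A ⊆ B)).filter (fun B => 0 < ec Δ k B) := by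
      rw [Finset.filter_filter]
    rw [hff]
    have hdrop : ∑ B ∈ ((lvl Δ j).filter (fun B => A ⊆ B)).filter (fun B => 0 < ec Δ k B),
        (ec Δ k B : ℝ) = ∑ B ∈ (lvl Δ j).filter (fun B => A ⊆ B), (ec Δ k B : ℝ) := by
      apply Finset.sum_filter_of_ne
      intro B _ hne
      by_contra hzero
      push_neg at hzero
      have : ec Δ k B = 0 := by omega
      rw [this] at hne
      simp at hne
    rw [hdrop]
    rw [show ∑ B ∈ (lvl Δ j).filter (fun B => A ⊆ B), (ec Δ k B : ℝ)
        = ((∑ B ∈ (lvl Δ j).filter (fun B => A ⊆ B), ec Δ k B : ℕ) : ℝ) by push_cast; rfl]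
    rw [CL hΔ haj hjk A hAm.2]
  have hSa : ∑ x ∈ t, aF x = (((d+2)*(d+1) : ℕ) : ℝ) * (ec Δ k A : ℝ) := by
    rw [ht, Finset.sum_sigma]
    have h2 : ∀ B ∈ EB, ∑ w ∈ B \ A, aF ⟨B, w⟩ = 2 * (ec Δ k B : ℝ) := by
      intro B hB
      have hc : ∀ w ∈ B \ A, aF ⟨B, w⟩ = (ec Δ k B : ℝ) := fun _ _ => rfl
      rw [Finset.sum_congr rfl hc, Finset.sum_const, hcard2 B hB]
      simp [two_smul, two_mul]
    rw [Finset.sum_congr rfl h2, ← Finset.mul_sum]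
    have h3 := hsum_zero (a+2) (by omega) (by omega)
    rw [← hEB] at h3
    rw [h3]
    have hka : k - a = d + 2 := by omega
    have ha2 : a + 2 - a = 2 := by omega
    rw [hka, ha2]
    have := choose_two_two d
    push_cast [← this]
    ring
  -- the MS bound for the sum of bF
  set I := (lvl Δ (a+1)).filter (fun C => A ⊆ C ∧ 0 < ec Δ k C) with hI
  set adj : Finset V → Finset V → Prop := fun C C' => C ≠ C' ∧ C ∪ C' ∈ Δ with hadjdef
  have hSb : ∑ x ∈ t, bF x ≤ SP adj I (fun C => (ec Δ k C : ℝ)) := by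
    set φ : (Σ _ : Finset V, V) → Finset V × Finset V :=
      fun x => (insert x.2 A, x.1.erase x.2) with hφ
    have hinj : ∀ x ∈ t, ∀ y ∈ t, φ x = φ y → x = y := by
      intro x hx y hy heq
      obtain ⟨hx1, hx2, hx3, hx4, hx5, hx6⟩ := hmem x hx
      obtain ⟨hy1, hy2, hy3, hy4, hy5, hy6⟩ := hmem y hy
      have h1 : insert x.2 A = insert y.2 A := congrArg Prod.fst heq
      have h2 : x.1.erase x.2 = y.1.erase y.2 := congrArg Prod.snd heq
      have hw : x.2 = y.2 := by
        have : x.2 ∈ insert y.2 A := h1 ▸ Finset.mem_insert_self x.2 A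
        rcases Finset.mem_insert.mp this with h | h
        · exact h
        · exact absurd h hx6
      have hB : x.1 = y.1 := by
        have e1 : insert x.2 (x.1.erase x.2) = x.1 := Finset.insert_erase hx5
        have e2 : insert y.2 (y.1.erase y.2) = y.1 := Finset.insert_erase hy5
        rw [← e1, ← e2, h2, hw]
      obtain ⟨xB, xw⟩ := x
      obtain ⟨yB, yw⟩ := y
      simp only at hw hB
      subst hw hB
      rfl
    have himg : ∀ x ∈ t, φ x ∈ (I ×ˢ I).filter (fun P => adj P.1 P.2) := by
      intro x hx
      obtain ⟨hx1, hx2, hx3, hx4, hx5, hx6⟩ := hmem x hx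
      rw [Finset.mem_filter, Finset.mem_product]
      have hCsub : insert x.2 A ⊆ x.1 := Finset.insert_subset hx5 hx3
      have hC'sub : x.1.erase x.2 ⊆ x.1 := Finset.erase_subset _ _
      have hCmem : insert x.2 A ∈ I := by
        rw [hI, Finset.mem_filter, mem_lvl]
        refine ⟨⟨hΔ x.1 hx1 _ hCsub, ?_⟩, Finset.subset_insert _ _, hbFins x hx⟩
        rw [Finset.card_insert_of_notMem hx6, hAm.2]
      have hC'mem : x.1.erase x.2 ∈ I := by
        rw [hI, Finset.mem_filter, mem_lvl]
        refine ⟨⟨hΔ x.1 hx1 _ hC'sub, ?_⟩, Finset.subset_erase.mpr ⟨hx3, hx6⟩, hbFers x hx⟩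
        rw [Finset.card_erase_of_mem hx5, hx2]
        omega
      refine ⟨⟨hCmem, hC'mem⟩, ?_, ?_⟩
      · intro hcontra
        have hcontra' : insert x.2 A = x.1.erase x.2 := hcontra
        have : x.2 ∈ x.1.erase x.2 := hcontra' ▸ Finset.mem_insert_self _ _
        exact Finset.notMem_erase _ _ this
      · show insert x.2 A ∪ x.1.erase x.2 ∈ Δ
        rw [insert_union_erase hx5 hx3]
        exact hx1
    have hsum_im : ∑ x ∈ t, bF x
        = ∑ P ∈ t.image φ, (ec Δ k P.1 : ℝ) * (ec Δ k P.2 : ℝ) := by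
      rw [Finset.sum_image hinj]
    rw [hsum_im]
    have hsub : t.image φ ⊆ (I ×ˢ I).filter (fun P => adj P.1 P.2) := by
      intro P hP
      obtain ⟨x, hx, rfl⟩ := Finset.mem_image.mp hP
      exact himg x hx
    have hstep : ∑ P ∈ t.image φ, (ec Δ k P.1 : ℝ) * (ec Δ k P.2 : ℝ)
        ≤ ∑ P ∈ (I ×ˢ I).filter (fun P => adj P.1 P.2),
            (ec Δ k P.1 : ℝ) * (ec Δ k P.2 : ℝ) := by
      apply Finset.sum_le_sum_of_subset_of_nonneg hsub
      intro P _ _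
      positivity
    refine hstep.trans (le_of_eq ?_)
    rw [SP, Finset.sum_filter, ← Finset.sum_product']
  have hcl : ∀ T ⊆ I, (∀ x ∈ T, ∀ y ∈ T, x ≠ y → adj x y) → T.card ≤ d + m + 2 := by
    intro T hT hadjT
    have := cliquebound hΔ hflag hface hAm.1 hAm.2 (by omega) T hT
      (fun x hx y hy hxy => hadjT x hx y hy hxy)
    have hra : r - a = d + m + 2 := by omega
    omega
  have hMS : SP adj I (fun C => (ec Δ k C : ℝ))
      ≤ (1 - 1/((d+m+2 : ℕ):ℝ)) * (∑ C ∈ I, (ec Δ k C : ℝ))^2 := by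
    apply MS adj ?_ ?_ (d+m+2) (by omega) I hcl _ (fun C => by positivity)
    · rintro x y ⟨h1, h2⟩
      exact ⟨h1.symm, Finset.union_comm x y ▸ h2⟩
    · rintro x ⟨h1, _⟩
      exact h1 rfl
  have hQ : ∑ C ∈ I, (ec Δ k C : ℝ) = (((d+2) * ec Δ k A : ℕ) : ℝ) := by
    rw [hI]
    have h3 := hsum_zero (a+1) (by omega) (by omega)
    rw [h3]
    have hka : k - a = d + 2 := by omega
    have ha1 : a + 1 - a = 1 := by omega
    rw [hka, ha1, Nat.choose_one_right]
  -- now apply logSum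
  have hlogsum := logSum t aF bF haFnn hbFpos
  -- lower bound log (sum aF / sum bF) by log (sum aF / BOUND)
  set S := ∑ x ∈ t, aF x with hS
  set Bb := ∑ x ∈ t, bF x with hBb
  have hSpos : 0 < S := by
    rw [hSa]
    have : (0:ℝ) < ((d+2)*(d+1) : ℕ) := by positivity
    have h2 : (0:ℝ) < (ec Δ k A : ℝ) := by exact_mod_cast hEpos
    positivity
  have htne : t.Nonempty := by
    by_contra hemp
    rw [Finset.not_nonempty_iff_eq_empty] at hemp
    rw [hS, hemp, Finset.sum_empty] at hSpos
    exact lt_irrefl 0 hSpos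
  have hBbpos : 0 < Bb := Finset.sum_pos hbFpos htne
  set BD := (1 - 1/((d+m+2 : ℕ):ℝ)) * (((d+2) * ec Δ k A : ℕ) : ℝ)^2 with hBD
  have hBDfrac : (0:ℝ) < 1 - 1/((d+m+2 : ℕ):ℝ) := by
    have h1 : (2:ℝ) ≤ ((d+m+2 : ℕ):ℝ) := by exact_mod_cast (by omega : 2 ≤ d+m+2)
    have h2 : 1/((d+m+2:ℕ):ℝ) ≤ 1/2 := by
      apply one_div_le_one_div_of_le <;> linarith
    linarith
  have hBDpos : 0 < BD := by
    rw [hBD]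
    have h2 : (0:ℝ) < (((d+2) * ec Δ k A : ℕ) : ℝ) := by
      have : 0 < (d+2) * ec Δ k A := by positivity
      exact_mod_cast this
    positivity
  have hBbBD : Bb ≤ BD := by
    rw [hBb, hBD, ← hQ]
    exact hSb.trans hMS
  have hmono : S * Real.log (S / BD) ≤ S * Real.log (S / Bb) := by
    apply mul_le_mul_of_nonneg_left _ hSpos.le
    apply Real.log_le_log (by positivity)
    apply div_le_div_of_nonneg_left hSpos.le hBbpos hBbBD
  -- identify the RHS sum with the target
  have hsplit : ∑ x ∈ t, aF x * Real.log (aF x / bF x)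
      = ∑ B ∈ EB, ∑ w ∈ B \ A,
          ((ec Δ k B : ℝ) * Real.log (ec Δ k B)
            - (ec Δ k B : ℝ) * Real.log (ec Δ k (insert w A))
            - (ec Δ k B : ℝ) * Real.log (ec Δ k (B.erase w))) := by
    rw [ht, Finset.sum_sigma]
    refine Finset.sum_congr rfl fun B hB => Finset.sum_congr rfl fun w hw => ?_
    have hxt : (⟨B, w⟩ : Σ _ : Finset V, V) ∈ t := by
      rw [ht, Finset.mem_sigma]
      exact ⟨hB, hw⟩
    have h1 : (0:ℝ) < aF ⟨B, w⟩ := haFpos _ hxt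
    have h2 : (0:ℝ) < (ec Δ k (insert w A) : ℝ) := by
      have := hbFins _ hxt; exact_mod_cast this
    have h3 : (0:ℝ) < (ec Δ k (B.erase w) : ℝ) := by
      have := hbFers _ hxt; exact_mod_cast this
    show aF ⟨B, w⟩ * Real.log (aF ⟨B, w⟩ / bF ⟨B, w⟩) = _
    rw [hbF]
    show aF ⟨B, w⟩ * Real.log (aF ⟨B, w⟩
        / ((ec Δ k (insert w A) : ℝ) * (ec Δ k (B.erase w) : ℝ))) = _
    rw [Real.log_div h1.ne' (by positivity), Real.log_mul h2.ne' h3.ne']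
    show (ec Δ k B : ℝ) * _ = _
    ring
  -- final: rewrite LHS
  have hfinal : (((d+2)*(d+1) : ℕ) : ℝ) * (ec Δ k A : ℝ) *
      (Real.log (((d+1)*(d+m+2) : ℕ) : ℝ) - Real.log (((d+2)*(d+m+1) : ℕ) : ℝ)
        - Real.log (ec Δ k A)) = S * Real.log (S / BD) := by
    rw [hSa, hBD]
    have heA : (0:ℝ) < (ec Δ k A : ℝ) := by exact_mod_cast hEpos
    have hd1 : (0:ℝ) < ((d+1:ℕ):ℝ) := by positivity
    have hd2 : (0:ℝ) < ((d+2:ℕ):ℝ) := by positivity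
    have hs2 : (0:ℝ) < ((d+m+2:ℕ):ℝ) := by positivity
    have hs1 : (0:ℝ) < ((d+m+1:ℕ):ℝ) := by positivity
    have hfrac : 1 - 1/((d+m+2 : ℕ):ℝ) = ((d+m+1:ℕ):ℝ) / ((d+m+2:ℕ):ℝ) := by
      field_simp
      push_cast
      ring
    rw [hfrac]
    have harg : (((d+2)*(d+1) : ℕ) : ℝ) * (ec Δ k A : ℝ)
        / (((d+m+1:ℕ):ℝ) / ((d+m+2:ℕ):ℝ) * (((d+2) * ec Δ k A : ℕ) : ℝ)^2)
        = (((d+1)*(d+m+2) : ℕ) : ℝ) / ((((d+2)*(d+m+1) : ℕ) : ℝ) * (ec Δ k A : ℝ)) := by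
      push_cast
      field_simp
    rw [harg]
    rw [Real.log_div (by positivity) (by positivity), Real.log_mul (by positivity) heA.ne']
    ring
  calc (((d+2)*(d+1) : ℕ) : ℝ) * (ec Δ k A : ℝ) *
      (Real.log (((d+1)*(d+m+2) : ℕ) : ℝ) - Real.log (((d+2)*(d+m+1) : ℕ) : ℝ)
        - Real.log (ec Δ k A))
      = S * Real.log (S / BD) := hfinal
    _ ≤ S * Real.log (S / Bb) := hmono
    _ ≤ ∑ x ∈ t, aF x * Real.log (aF x / bF x) := hlogsum
    _ = _ := hsplit

noncomputable def Phi (Δ : Finset (Finset V)) (k i : ℕ) : ℝ :=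
  ∑ A ∈ lvl Δ i, (ec Δ k A : ℝ) * Real.log (ec Δ k A)

lemma filter_pos_split {Δ : Finset (Finset V)} {k j : ℕ} (C : Finset V) :
    (lvl Δ j).filter (fun B => C ⊆ B ∧ 0 < ec Δ k B)
      = ((lvl Δ j).filter (fun B => 0 < ec Δ k B)).filter (fun B => C ⊆ B) := by
  rw [Finset.filter_filter]
  ext B
  simp only [Finset.mem_filter]
  tauto

lemma sum_ec_pos_filter {Δ : Finset (Finset V)} {k : ℕ}
    (hΔ : ∀ B ∈ Δ, ∀ A ⊆ B, A ∈ Δ) {c j : ℕ} (hcj : c ≤ j) (hjk : j ≤ k)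
    (C : Finset V) (hC : C.card = c) :
    ∑ B ∈ (lvl Δ j).filter (fun B => C ⊆ B ∧ 0 < ec Δ k B), (ec Δ k B : ℝ)
      = (((k-c).choose (j-c) * ec Δ k C : ℕ) : ℝ) := by
  rw [filter_pos_split]
  have hcomm : ((lvl Δ j).filter (fun B => 0 < ec Δ k B)).filter (fun B => C ⊆ B)
      = ((lvl Δ j).filter (fun B => C ⊆ B)).filter (fun B => 0 < ec Δ k B) := by
    rw [Finset.filter_filter, Finset.filter_filter]
    ext B
    simp only [Finset.mem_filter]
    tauto
  rw [hcomm]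
  have hdrop : ∑ B ∈ ((lvl Δ j).filter (fun B => C ⊆ B)).filter (fun B => 0 < ec Δ k B),
      (ec Δ k B : ℝ) = ∑ B ∈ (lvl Δ j).filter (fun B => C ⊆ B), (ec Δ k B : ℝ) := by
    apply Finset.sum_filter_of_ne
    intro B _ hne
    by_contra hzero
    push_neg at hzero
    have h0 : ec Δ k B = 0 := by omega
    rw [h0] at hne
    simp at hne
  rw [hdrop]
  rw [show ∑ B ∈ (lvl Δ j).filter (fun B => C ⊆ B), (ec Δ k B : ℝ)
      = ((∑ B ∈ (lvl Δ j).filter (fun B => C ⊆ B), ec Δ k B : ℕ) : ℝ) by push_cast; rfl]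
  rw [CL hΔ hcj hjk C hC]

lemma sum_ec_lvl {Δ : Finset (Finset V)} {k : ℕ}
    (hΔ : ∀ B ∈ Δ, ∀ A ⊆ B, A ∈ Δ) {j : ℕ} (hjk : j ≤ k) :
    ∑ A ∈ lvl Δ j, ec Δ k A = k.choose j * ec Δ k ∅ := by
  have h1 : lvl Δ j = (lvl Δ j).filter (fun B => (∅ : Finset V) ⊆ B) := by
    rw [Finset.filter_true_of_mem]
    intro B _
    exact Finset.empty_subset B
  rw [h1, CL hΔ (Nat.zero_le j) hjk ∅ Finset.card_empty]
  simp

lemma INEQ1 {Δ : Finset (Finset V)} {k r : ℕ}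
    (hΔ : ∀ B ∈ Δ, ∀ A ⊆ B, A ∈ Δ) (hflag : IsFlag Δ)
    (hface : ∀ B ∈ Δ, B.card ≤ r)
    (a d m : ℕ) (hk : k = a + 2 + d) (hr : r = a + 2 + d + m) :
    (((d+2)*(d+1) : ℕ) : ℝ) * ((k.choose a * ec Δ k ∅ : ℕ) : ℝ) *
        (Real.log (((d+1)*(d+m+2) : ℕ) : ℝ) - Real.log (((d+2)*(d+m+1) : ℕ) : ℝ))
      - (((d+2)*(d+1) : ℕ) : ℝ) * Phi Δ k a
      ≤ (((a+2)*(a+1) : ℕ) : ℝ) * Phi Δ k (a+2)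
        - 2 * (((a+1)*(d+1) : ℕ) : ℝ) * Phi Δ k (a+1) := by
  classical
  set e := ec Δ k with he
  set lvlF := (lvl Δ (a+2)).filter (fun B => 0 < e B) with hlvlF
  -- swap skeleton
  have hBfacts : ∀ B ∈ lvlF, B ∈ Δ ∧ B.card = a + 2 := by
    intro B hB
    rw [hlvlF, Finset.mem_filter, mem_lvl] at hB
    exact hB.1
  have hswap : ∀ (g : Finset V → Finset V → ℝ),
      (∑ A ∈ lvl Δ a, ∑ B ∈ (lvl Δ (a+2)).filter (fun B => A ⊆ B ∧ 0 < e B), g A B)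
      = ∑ B ∈ lvlF, ∑ A ∈ B.powersetCard a, g A B := by
    intro g
    have h1 : ∀ A ∈ lvl Δ a,
        ∑ B ∈ (lvl Δ (a+2)).filter (fun B => A ⊆ B ∧ 0 < e B), g A B
        = ∑ B ∈ lvlF.filter (fun B => A ⊆ B), g A B := by
      intro A _
      have hseteq : (lvl Δ (a+2)).filter (fun B => A ⊆ B ∧ 0 < e B)
          = lvlF.filter (fun B => A ⊆ B) := by
        ext B
        rw [hlvlF]
        simp only [Finset.mem_filter]
        tauto
      rw [hseteq]
    rw [Finset.sum_congr rfl h1, swapsum (lvl Δ a) lvlF (fun A B => A ⊆ B) g]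
    refine Finset.sum_congr rfl fun B hB => ?_
    rw [lvl_filter_eq_powersetCard hΔ (hBfacts B hB).1 a]
  -- per-A inequality summed
  have hsum := Finset.sum_le_sum
    (fun A hA => perA hΔ hflag hface a d m hk hr A hA)
  -- LHS evaluation
  set K1 := Real.log (((d+1)*(d+m+2) : ℕ) : ℝ) with hK1
  set K2 := Real.log (((d+2)*(d+m+1) : ℕ) : ℝ) with hK2
  have hLHS : ∑ A ∈ lvl Δ a,
      ((((d+2)*(d+1) : ℕ) : ℝ) * (e A : ℝ) * (K1 - K2 - Real.log (e A)))
      = (((d+2)*(d+1) : ℕ) : ℝ) * ((k.choose a * e ∅ : ℕ) : ℝ) * (K1 - K2)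
        - (((d+2)*(d+1) : ℕ) : ℝ) * Phi Δ k a := by
    have hexp : ∀ A ∈ lvl Δ a,
        (((d+2)*(d+1) : ℕ) : ℝ) * (e A : ℝ) * (K1 - K2 - Real.log (e A))
        = (((d+2)*(d+1) : ℕ) : ℝ) * (K1 - K2) * (e A : ℝ)
          - (((d+2)*(d+1) : ℕ) : ℝ) * ((e A : ℝ) * Real.log (e A)) := by
      intro A _
      ring
    rw [Finset.sum_congr rfl hexp, Finset.sum_sub_distrib, ← Finset.mul_sum, ← Finset.mul_sum]
    have hcast : ∑ A ∈ lvl Δ a, (e A : ℝ) = ((∑ A ∈ lvl Δ a, e A : ℕ) : ℝ) := by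
      push_cast; rfl
    rw [hcast, sum_ec_lvl hΔ (by omega), ← Phi]
    ring
  -- S1
  have hS1 : ∑ A ∈ lvl Δ a, ∑ B ∈ (lvl Δ (a+2)).filter (fun B => A ⊆ B ∧ 0 < e B),
        ∑ w ∈ B \ A, (e B : ℝ) * Real.log (e B)
      = (((a+2)*(a+1) : ℕ) : ℝ) * Phi Δ k (a+2) := by
    rw [hswap]
    have hperB : ∀ B ∈ lvlF, ∑ A ∈ B.powersetCard a, ∑ w ∈ B \ A, (e B : ℝ) * Real.log (e B)
        = (((a+2)*(a+1) : ℕ) : ℝ) * ((e B : ℝ) * Real.log (e B)) :=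
      fun B hB => HB1 B a (hBfacts B hB).2 _
    rw [Finset.sum_congr rfl hperB, ← Finset.mul_sum]
    congr 1
    rw [hlvlF, Phi]
    apply Finset.sum_filter_of_ne
    intro B _ hne
    by_contra hzero
    push_neg at hzero
    have h0 : e B = 0 := by omega
    rw [h0] at hne
    simp at hne
  -- S2 and S3 share the tail computation
  have htail : ∑ B ∈ lvlF, ∑ C ∈ B.powersetCard (a+1), (e B : ℝ) * Real.log (e C)
      = (((d+1) : ℕ) : ℝ) * Phi Δ k (a+1) := by
    have hpc : ∀ B ∈ lvlF, ∑ C ∈ B.powersetCard (a+1), (e B : ℝ) * Real.log (e C)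
        = ∑ C ∈ (lvl Δ (a+1)).filter (fun C => C ⊆ B), (e B : ℝ) * Real.log (e C) := by
      intro B hB
      rw [lvl_filter_eq_powersetCard hΔ (hBfacts B hB).1 (a+1)]
    rw [Finset.sum_congr rfl hpc,
      swapsum lvlF (lvl Δ (a+1)) (fun B C => C ⊆ B) (fun B C => (e B : ℝ) * Real.log (e C))]
    have hperC : ∀ C ∈ lvl Δ (a+1),
        ∑ B ∈ lvlF.filter (fun B => C ⊆ B), (e B : ℝ) * Real.log (e C)
        = (((d+1) : ℕ) : ℝ) * ((e C : ℝ) * Real.log (e C)) := by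
      intro C hC
      rw [← Finset.sum_mul]
      have hset : lvlF.filter (fun B => C ⊆ B)
          = (lvl Δ (a+2)).filter (fun B => C ⊆ B ∧ 0 < e B) := by
        ext B
        rw [hlvlF]
        simp only [Finset.mem_filter]
        tauto
      rw [hset, sum_ec_pos_filter hΔ (by omega) (by omega) C (mem_lvl.mp hC).2]
      have hka : k - (a+1) = d + 1 := by omega
      have ha1 : a + 2 - (a+1) = 1 := by omega
      rw [hka, ha1, Nat.choose_one_right]
      push_cast
      ring
    rw [Finset.sum_congr rfl hperC, ← Finset.mul_sum, ← Phi]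
  have hS2 : ∑ A ∈ lvl Δ a, ∑ B ∈ (lvl Δ (a+2)).filter (fun B => A ⊆ B ∧ 0 < e B),
        ∑ w ∈ B \ A, (e B : ℝ) * Real.log (e (insert w A))
      = (((a+1)*(d+1) : ℕ) : ℝ) * Phi Δ k (a+1) := by
    rw [hswap]
    have hperB : ∀ B ∈ lvlF,
        ∑ A ∈ B.powersetCard a, ∑ w ∈ B \ A, (e B : ℝ) * Real.log (e (insert w A))
        = (((a+1) : ℕ) : ℝ) * ∑ C ∈ B.powersetCard (a+1), (e B : ℝ) * Real.log (e C) := by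
      intro B hB
      have hpull : ∑ A ∈ B.powersetCard a, ∑ w ∈ B \ A, (e B : ℝ) * Real.log (e (insert w A))
          = (e B : ℝ) * ∑ A ∈ B.powersetCard a, ∑ w ∈ B \ A, Real.log (e (insert w A)) := by
        rw [Finset.mul_sum]
        refine Finset.sum_congr rfl fun A _ => ?_
        rw [Finset.mul_sum]
      rw [hpull, HB2 B a (hBfacts B hB).2 (fun C => Real.log (e C)), Finset.mul_sum,
        Finset.mul_sum, Finset.mul_sum]
      refine Finset.sum_congr rfl fun C _ => ?_
      ring
    rw [Finset.sum_congr rfl hperB, ← Finset.mul_sum, htail]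
    push_cast
    ring
  have hS3 : ∑ A ∈ lvl Δ a, ∑ B ∈ (lvl Δ (a+2)).filter (fun B => A ⊆ B ∧ 0 < e B),
        ∑ w ∈ B \ A, (e B : ℝ) * Real.log (e (B.erase w))
      = (((a+1)*(d+1) : ℕ) : ℝ) * Phi Δ k (a+1) := by
    rw [hswap]
    have hperB : ∀ B ∈ lvlF,
        ∑ A ∈ B.powersetCard a, ∑ w ∈ B \ A, (e B : ℝ) * Real.log (e (B.erase w))
        = (((a+1) : ℕ) : ℝ) * ∑ C ∈ B.powersetCard (a+1), (e B : ℝ) * Real.log (e C) := by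
      intro B hB
      have hpull : ∑ A ∈ B.powersetCard a, ∑ w ∈ B \ A, (e B : ℝ) * Real.log (e (B.erase w))
          = (e B : ℝ) * ∑ A ∈ B.powersetCard a, ∑ w ∈ B \ A, Real.log (e (B.erase w)) := by
        rw [Finset.mul_sum]
        refine Finset.sum_congr rfl fun A _ => ?_
        rw [Finset.mul_sum]
      rw [hpull, HB3 B a (hBfacts B hB).2 (fun C => Real.log (e C)), Finset.mul_sum,
        Finset.mul_sum, Finset.mul_sum]
      refine Finset.sum_congr rfl fun C _ => ?_
      ring
    rw [Finset.sum_congr rfl hperB, ← Finset.mul_sum, htail]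
    push_cast
    ring
  -- split RHS of hsum
  have hsplitR : ∑ A ∈ lvl Δ a, ∑ B ∈ (lvl Δ (a+2)).filter (fun B => A ⊆ B ∧ 0 < e B),
        ∑ w ∈ B \ A,
          ((e B : ℝ) * Real.log (e B)
            - (e B : ℝ) * Real.log (e (insert w A))
            - (e B : ℝ) * Real.log (e (B.erase w)))
      = (((a+2)*(a+1) : ℕ) : ℝ) * Phi Δ k (a+2)
        - (((a+1)*(d+1) : ℕ) : ℝ) * Phi Δ k (a+1)
        - (((a+1)*(d+1) : ℕ) : ℝ) * Phi Δ k (a+1) := by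
    have hexp : ∑ A ∈ lvl Δ a, ∑ B ∈ (lvl Δ (a+2)).filter (fun B => A ⊆ B ∧ 0 < e B),
          ∑ w ∈ B \ A,
            ((e B : ℝ) * Real.log (e B)
              - (e B : ℝ) * Real.log (e (insert w A))
              - (e B : ℝ) * Real.log (e (B.erase w)))
        = (∑ A ∈ lvl Δ a, ∑ B ∈ (lvl Δ (a+2)).filter (fun B => A ⊆ B ∧ 0 < e B),
            ∑ w ∈ B \ A, (e B : ℝ) * Real.log (e B))
          - (∑ A ∈ lvl Δ a, ∑ B ∈ (lvl Δ (a+2)).filter (fun B => A ⊆ B ∧ 0 < e B),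
            ∑ w ∈ B \ A, (e B : ℝ) * Real.log (e (insert w A)))
          - (∑ A ∈ lvl Δ a, ∑ B ∈ (lvl Δ (a+2)).filter (fun B => A ⊆ B ∧ 0 < e B),
            ∑ w ∈ B \ A, (e B : ℝ) * Real.log (e (B.erase w))) := by
      simp only [Finset.sum_sub_distrib]
    rw [hexp, hS1, hS2, hS3]
  rw [hLHS, hsplitR] at hsum
  have : 2 * (((a+1)*(d+1) : ℕ) : ℝ) * Phi Δ k (a+1)
      = (((a+1)*(d+1) : ℕ) : ℝ) * Phi Δ k (a+1) + (((a+1)*(d+1) : ℕ) : ℝ) * Phi Δ k (a+1) := by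
    ring
  rw [this]
  linarith [hsum]

noncomputable def Fq (Δ : Finset (Finset V)) (k i : ℕ) : ℝ :=
  ((i.factorial * (k-i).factorial : ℕ) : ℝ) * Phi Δ k i
    + ((k.factorial * ec Δ k ∅ : ℕ) : ℝ) * Real.log (((k-i).factorial : ℕ) : ℝ)

lemma Fconv {Δ : Finset (Finset V)} {k r : ℕ}
    (hΔ : ∀ B ∈ Δ, ∀ A ⊆ B, A ∈ Δ) (hflag : IsFlag Δ)
    (hface : ∀ B ∈ Δ, B.card ≤ r)
    (a d m : ℕ) (hk : k = a + 2 + d) (hr : r = a + 2 + d + m) :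
    ((k.factorial * ec Δ k ∅ : ℕ) : ℝ) *
        (Real.log ((d+m+2 : ℕ) : ℝ) - Real.log ((d+m+1 : ℕ) : ℝ))
      ≤ Fq Δ k (a+2) + Fq Δ k a - 2 * Fq Δ k (a+1) := by
  classical
  have h1 := INEQ1 hΔ hflag hface a d m hk hr
  have hpos : (0:ℝ) ≤ ((a.factorial * d.factorial : ℕ) : ℝ) := by positivity
  have hmul := mul_le_mul_of_nonneg_left h1 hpos
  -- helper nat facts
  have hka2 : k - (a+2) = d := by omega
  have hka1 : k - (a+1) = d+1 := by omega
  have hka : k - a = d+2 := by omega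
  have hNid : a.factorial * d.factorial * ((d+2)*(d+1)) * k.choose a = k.factorial := by
    have hchoose := Nat.choose_mul_factorial_mul_factorial (show a ≤ k by omega)
    rw [hka] at hchoose
    have hfac2 : (d+2).factorial = (d+2)*(d+1)*d.factorial := by
      rw [Nat.factorial_succ, Nat.factorial_succ]
      ring
    rw [← hchoose, hfac2]
    ring
  have hNidR : ((a.factorial : ℕ) : ℝ) * ((d.factorial : ℕ) : ℝ)
      * ((((d+2)*(d+1) : ℕ)) : ℝ) * ((k.choose a : ℕ) : ℝ) = ((k.factorial : ℕ) : ℝ) := by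
    exact_mod_cast congrArg (fun n : ℕ => (n : ℝ)) hNid
  -- log identities
  have hd : (0:ℝ) < ((d:ℕ):ℝ) + 1 := by positivity
  have hlogK1 : Real.log (((d+1)*(d+m+2) : ℕ) : ℝ)
      = Real.log (((d+1 : ℕ)) : ℝ) + Real.log (((d+m+2 : ℕ)) : ℝ) := by
    push_cast
    rw [Real.log_mul (by positivity) (by positivity)]
  have hlogK2 : Real.log (((d+2)*(d+m+1) : ℕ) : ℝ)
      = Real.log (((d+2 : ℕ)) : ℝ) + Real.log (((d+m+1 : ℕ)) : ℝ) := by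
    push_cast
    rw [Real.log_mul (by positivity) (by positivity)]
  have hfacpos : ∀ n : ℕ, (0:ℝ) < ((n.factorial : ℕ) : ℝ) := by
    intro n
    exact_mod_cast n.factorial_pos
  have hlogfac2 : Real.log (((d+2).factorial : ℕ) : ℝ)
      = Real.log (((d+2:ℕ)) : ℝ) + Real.log (((d+1:ℕ)) : ℝ)
        + Real.log ((d.factorial : ℕ) : ℝ) := by
    have hfac2 : (d+2).factorial = (d+2)*((d+1)*d.factorial) := by
      rw [Nat.factorial_succ, Nat.factorial_succ]
    rw [hfac2]
    push_cast
    rw [Real.log_mul (by positivity) (by positivity), Real.log_mul (by positivity) (by positivity)]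
    ring
  have hlogfac1 : Real.log (((d+1).factorial : ℕ) : ℝ)
      = Real.log (((d+1:ℕ)) : ℝ) + Real.log ((d.factorial : ℕ) : ℝ) := by
    have hfac1 : (d+1).factorial = (d+1)*d.factorial := Nat.factorial_succ d
    rw [hfac1]
    push_cast
    rw [Real.log_mul (by positivity) (by positivity)]
  -- factorial cast identities for the Phi coefficients
  have hfA2 : (((a+2).factorial * d.factorial : ℕ) : ℝ)
      = ((a.factorial * d.factorial : ℕ) : ℝ) * (((a+2)*(a+1) : ℕ) : ℝ) := by
    have : (a+2).factorial = (a+2)*(a+1)*a.factorial := by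
      rw [Nat.factorial_succ, Nat.factorial_succ]
      ring
    rw [this]
    push_cast
    ring
  have hfA1 : (((a+1).factorial * (d+1).factorial : ℕ) : ℝ)
      = ((a.factorial * d.factorial : ℕ) : ℝ) * (((a+1)*(d+1) : ℕ) : ℝ) := by
    have e1 : (a+1).factorial = (a+1)*a.factorial := Nat.factorial_succ a
    have e2 : (d+1).factorial = (d+1)*d.factorial := Nat.factorial_succ d
    rw [e1, e2]
    push_cast
    ring
  have hfA0 : ((a.factorial * (d+2).factorial : ℕ) : ℝ)
      = ((a.factorial * d.factorial : ℕ) : ℝ) * (((d+2)*(d+1) : ℕ) : ℝ) := by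
    have e2 : (d+2).factorial = (d+2)*(d+1)*d.factorial := by
      rw [Nat.factorial_succ, Nat.factorial_succ]
      ring
    rw [e2]
    push_cast
    ring
  have hMid : ((k.factorial * ec Δ k ∅ : ℕ) : ℝ)
      = ((a.factorial * d.factorial : ℕ) : ℝ) * ((((d+2)*(d+1) : ℕ)) : ℝ)
        * (((k.choose a * ec Δ k ∅ : ℕ)) : ℝ) := by
    push_cast
    push_cast at hNidR
    nlinarith [hNidR]
  rw [Fq, Fq, Fq, hka2, hka1, hka]
  rw [hlogfac2, hlogfac1, hfA2, hfA1, hfA0, hMid]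
  rw [hlogK1, hlogK2] at hmul
  nlinarith [hmul]

lemma key {Δ : Finset (Finset V)} {k r p : ℕ}
    (hΔ : ∀ B ∈ Δ, ∀ A ⊆ B, A ∈ Δ) (hflag : IsFlag Δ)
    (hface : ∀ B ∈ Δ, B.card ≤ r) (hempty : ∅ ∈ Δ)
    (hp : 0 < p) (hpk : p < k) (hkr : k ≤ r)
    (hN : 0 < ec Δ k ∅) :
    (p : ℝ) * (Real.log ((ec Δ k ∅ : ℕ) : ℝ) - Real.log ((r.choose k : ℕ) : ℝ))
      ≤ (k : ℝ) * (Real.log ((faceCount Δ p : ℕ) : ℝ) - Real.log ((r.choose p : ℕ) : ℝ)) := by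
  classical
  set M : ℝ := ((k.factorial * ec Δ k ∅ : ℕ) : ℝ) with hM
  have hMpos : 0 < M := by
    rw [hM]
    have : 0 < k.factorial * ec Δ k ∅ := Nat.mul_pos k.factorial_pos hN
    exact_mod_cast this
  have hNp : 0 < faceCount Δ p := by
    have hne : (lvl Δ k).Nonempty := by
      have h1 : 0 < ((lvl Δ k).filter (fun K => (∅ : Finset V) ⊆ K)).card := hN
      obtain ⟨K, hK⟩ := Finset.card_pos.mp h1
      exact ⟨K, (Finset.mem_filter.mp hK).1⟩
    obtain ⟨K, hK⟩ := hne
    rw [mem_lvl] at hK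
    obtain ⟨A, hAsub, hAcard⟩ := Finset.exists_subset_card_eq
      (show p ≤ K.card by omega)
    have : A ∈ lvl Δ p := mem_lvl.mpr ⟨hΔ K hK.1 A hAsub, hAcard⟩
    have : (lvl Δ p).Nonempty := ⟨A, this⟩
    exact Finset.card_pos.mpr this
  set G : ℕ → ℝ := fun j => Fq Δ k j - Fq Δ k (j+1)
      - M * Real.log ((r - j : ℕ) : ℝ) with hG
  have hstep : ∀ j, j + 2 ≤ k → G (j+1) ≤ G j := by
    intro j hj
    set d := k - j - 2 with hd
    set m := r - k with hm
    have hkd : k = j + 2 + d := by omega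
    have hrd : r = j + 2 + d + m := by omega
    have hconv := Fconv hΔ hflag hface j d m hkd hrd
    have h1 : r - j = d + m + 2 := by omega
    have h2 : r - (j+1) = d + m + 1 := by omega
    rw [hG]
    simp only []
    rw [h1, h2]
    rw [← hM] at hconv
    linarith
  have hanti : ∀ j, j < k → ∀ i, i ≤ j → G j ≤ G i := by
    intro j
    induction j with
    | zero =>
      intro _ i hi
      have : i = 0 := by omega
      subst this
      exact le_refl _
    | succ n ih =>
      intro hj i hi
      rcases Nat.lt_or_ge i (n+1) with h | h
      · have h1 : G (n+1) ≤ G n := hstep n (by omega)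
        have h2 : G n ≤ G i := ih (by omega) i (by omega)
        linarith
      · have : i = n+1 := by omega
        subst this
        exact le_refl _
  have hcheb : (p:ℝ) * ∑ j ∈ Finset.range k, G j
      ≤ (k:ℝ) * ∑ j ∈ Finset.range p, G j := by
    have hsplit : ∑ j ∈ Finset.range k, G j
        = ∑ j ∈ Finset.range p, G j + ∑ j ∈ Finset.Ico p k, G j :=
      (Finset.sum_range_add_sum_Ico G hpk.le).symm
    have hone : ∀ j ∈ Finset.Ico p k, (p:ℝ) * G j ≤ ∑ i ∈ Finset.range p, G i := by
      intro j hj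
      rw [Finset.mem_Ico] at hj
      have hterm : ∀ i ∈ Finset.range p, G j ≤ G i := by
        intro i hi
        rw [Finset.mem_range] at hi
        exact hanti j hj.2 i (by omega)
      calc (p:ℝ) * G j = ∑ _i ∈ Finset.range p, G j := by
            rw [Finset.sum_const, Finset.card_range, nsmul_eq_mul]
        _ ≤ ∑ i ∈ Finset.range p, G i := Finset.sum_le_sum hterm
    have h2 : (p:ℝ) * ∑ j ∈ Finset.Ico p k, G j
        ≤ ((k-p : ℕ):ℝ) * ∑ i ∈ Finset.range p, G i := by
      calc (p:ℝ) * ∑ j ∈ Finset.Ico p k, G j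
          = ∑ j ∈ Finset.Ico p k, (p:ℝ) * G j := by rw [Finset.mul_sum]
        _ ≤ ∑ _j ∈ Finset.Ico p k, ∑ i ∈ Finset.range p, G i := Finset.sum_le_sum hone
        _ = ((k-p : ℕ):ℝ) * ∑ i ∈ Finset.range p, G i := by
            rw [Finset.sum_const, Nat.card_Ico, nsmul_eq_mul]
    have hcast : ((k-p:ℕ):ℝ) = (k:ℝ) - (p:ℝ) := by
      rw [Nat.cast_sub hpk.le]
    rw [hcast] at h2
    rw [hsplit]
    nlinarith [h2]
  -- values of Fq at 0 and k
  have hlvl0 : lvl Δ 0 = {∅} := by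
    ext A
    simp only [mem_lvl, Finset.card_eq_zero, Finset.mem_singleton]
    constructor
    · rintro ⟨_, h⟩; exact h
    · rintro rfl; exact ⟨hempty, rfl⟩
  have hPhi0 : Phi Δ k 0 = (ec Δ k ∅ : ℝ) * Real.log ((ec Δ k ∅ : ℕ) : ℝ) := by
    rw [Phi, hlvl0, Finset.sum_singleton]
  have hNR : (0:ℝ) < ((ec Δ k ∅ : ℕ) : ℝ) := by exact_mod_cast hN
  have hkfR : (0:ℝ) < ((k.factorial : ℕ) : ℝ) := by exact_mod_cast k.factorial_pos
  have hFq0 : Fq Δ k 0 = M * Real.log ((k.factorial * ec Δ k ∅ : ℕ) : ℝ) := by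
    rw [Fq, hPhi0, Nat.sub_zero]
    simp only [Nat.factorial_zero, one_mul]
    rw [hM]
    push_cast
    rw [Real.log_mul hkfR.ne' hNR.ne']
    push_cast
    ring
  have hec1 : ∀ K ∈ lvl Δ k, ec Δ k K = 1 := by
    intro K hK
    have hKk := (mem_lvl.mp hK).2
    rw [ec]
    have : (lvl Δ k).filter (fun K' => K ⊆ K') = {K} := by
      ext K'
      simp only [Finset.mem_filter, Finset.mem_singleton]
      constructor
      · rintro ⟨hK', hsub⟩
        have hK'k := (mem_lvl.mp hK').2
        exact (Finset.eq_of_subset_of_card_le hsub (by omega)).symm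
      · rintro rfl
        exact ⟨hK, Finset.Subset.refl _⟩
    rw [this, Finset.card_singleton]
  have hPhik : Phi Δ k k = 0 := by
    rw [Phi]
    apply Finset.sum_eq_zero
    intro K hK
    rw [hec1 K hK]
    simp
  have hFqk : Fq Δ k k = 0 := by
    rw [Fq, hPhik, Nat.sub_self]
    simp
  -- prefix bound
  have hCkp : 0 < k.choose p := Nat.choose_pos hpk.le
  have hFqp : M * (Real.log ((k.factorial * ec Δ k ∅ : ℕ) : ℝ)
      - Real.log ((p.factorial * faceCount Δ p : ℕ) : ℝ)) ≤ Fq Δ k p := by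
    have hls := logSum (lvl Δ p) (fun A => (ec Δ k A : ℝ)) (fun _ => (1:ℝ))
      (fun A _ => by positivity) (fun _ _ => one_pos)
    have hsa : ∑ A ∈ lvl Δ p, (ec Δ k A : ℝ) = ((k.choose p * ec Δ k ∅ : ℕ) : ℝ) := by
      rw [show ∑ A ∈ lvl Δ p, (ec Δ k A : ℝ) = ((∑ A ∈ lvl Δ p, ec Δ k A : ℕ) : ℝ) by
        push_cast; rfl]
      rw [sum_ec_lvl hΔ (by omega)]
    have hsb : ∑ _A ∈ lvl Δ p, (1:ℝ) = ((faceCount Δ p : ℕ) : ℝ) := by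
      rw [Finset.sum_const, nsmul_eq_mul, mul_one]
      rfl
    rw [hsa, hsb] at hls
    have hls2 : ((k.choose p * ec Δ k ∅ : ℕ) : ℝ)
        * Real.log (((k.choose p * ec Δ k ∅ : ℕ) : ℝ) / ((faceCount Δ p : ℕ) : ℝ))
        ≤ Phi Δ k p := by
      refine hls.trans (le_of_eq ?_)
      rw [Phi]
      refine Finset.sum_congr rfl fun A _ => ?_
      rw [div_one]
    have hcoef : (0:ℝ) ≤ ((p.factorial * (k-p).factorial : ℕ) : ℝ) := by positivity
    have hmul := mul_le_mul_of_nonneg_left hls2 hcoef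
    rw [Fq]
    have hNpR : (0:ℝ) < ((faceCount Δ p : ℕ) : ℝ) := by exact_mod_cast hNp
    have hCNR : (0:ℝ) < ((k.choose p * ec Δ k ∅ : ℕ) : ℝ) := by
      have : 0 < k.choose p * ec Δ k ∅ := Nat.mul_pos hCkp hN
      exact_mod_cast this
    have hkfacid : p.factorial * (k-p).factorial * (k.choose p) = k.factorial := by
      have := Nat.choose_mul_factorial_mul_factorial hpk.le
      rw [← this]
      ring
    have heq : ((p.factorial * (k-p).factorial : ℕ) : ℝ)
        * (((k.choose p * ec Δ k ∅ : ℕ) : ℝ)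
          * Real.log (((k.choose p * ec Δ k ∅ : ℕ) : ℝ) / ((faceCount Δ p : ℕ) : ℝ)))
        + M * Real.log (((k-p).factorial : ℕ) : ℝ)
        = M * (Real.log ((k.factorial * ec Δ k ∅ : ℕ) : ℝ)
          - Real.log ((p.factorial * faceCount Δ p : ℕ) : ℝ)) := by
      have hCpR : (0:ℝ) < ((k.choose p : ℕ) : ℝ) := by exact_mod_cast hCkp
      have hpfR : (0:ℝ) < ((p.factorial : ℕ) : ℝ) := by exact_mod_cast p.factorial_pos
      have hkpfR : (0:ℝ) < (((k-p).factorial : ℕ) : ℝ) := by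
        exact_mod_cast (k-p).factorial_pos
      rw [hM]
      push_cast
      rw [Real.log_div (by positivity) hNpR.ne', Real.log_mul hCpR.ne' hNR.ne',
        Real.log_mul hkfR.ne' hNR.ne', Real.log_mul hpfR.ne' hNpR.ne']
      have hlogfac : Real.log ((k.factorial : ℕ) : ℝ)
          = Real.log ((p.factorial : ℕ) : ℝ) + Real.log (((k-p).factorial : ℕ) : ℝ)
            + Real.log ((k.choose p : ℕ) : ℝ) := by
        rw [← hkfacid]
        push_cast
        rw [Real.log_mul (by positivity) hCpR.ne', Real.log_mul hpfR.ne' hkpfR.ne']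
      push_cast at hlogfac
      have hkfacR : ((p.factorial : ℕ):ℝ) * (((k-p).factorial : ℕ):ℝ) * ((k.choose p : ℕ):ℝ)
          = ((k.factorial : ℕ):ℝ) := by
        exact_mod_cast congrArg (fun n : ℕ => (n:ℝ)) hkfacid
      rw [hlogfac, ← hkfacR]
      ring
    calc M * (Real.log ((k.factorial * ec Δ k ∅ : ℕ) : ℝ)
          - Real.log ((p.factorial * faceCount Δ p : ℕ) : ℝ))
        = ((p.factorial * (k-p).factorial : ℕ) : ℝ)
            * (((k.choose p * ec Δ k ∅ : ℕ) : ℝ)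
              * Real.log (((k.choose p * ec Δ k ∅ : ℕ) : ℝ) / ((faceCount Δ p : ℕ) : ℝ)))
          + M * Real.log (((k-p).factorial : ℕ) : ℝ) := heq.symm
      _ ≤ ((p.factorial * (k-p).factorial : ℕ) : ℝ) * Phi Δ k p
          + M * Real.log (((k-p).factorial : ℕ) : ℝ) := by linarith [hmul]
  -- telescoping sums
  have hTk : ∑ j ∈ Finset.range k, G j
      = Fq Δ k 0 - Fq Δ k k - M * ∑ j ∈ Finset.range k, Real.log ((r - j : ℕ) : ℝ) := by
    rw [hG]
    simp only []
    rw [Finset.sum_sub_distrib, Finset.sum_range_sub' (fun j => Fq Δ k j), ← Finset.mul_sum]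
  have hTp : ∑ j ∈ Finset.range p, G j
      = Fq Δ k 0 - Fq Δ k p - M * ∑ j ∈ Finset.range p, Real.log ((r - j : ℕ) : ℝ) := by
    rw [hG]
    simp only []
    rw [Finset.sum_sub_distrib, Finset.sum_range_sub' (fun j => Fq Δ k j), ← Finset.mul_sum]
  -- log of products
  have hLgen : ∀ n : ℕ, n ≤ r → ∑ j ∈ Finset.range n, Real.log ((r - j : ℕ) : ℝ)
      = Real.log ((n.factorial * r.choose n : ℕ) : ℝ) := by
    intro n hn
    have h1 : ∑ j ∈ Finset.range n, Real.log ((r - j : ℕ) : ℝ)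
        = Real.log (∏ j ∈ Finset.range n, ((r - j : ℕ) : ℝ)) := by
      rw [Real.log_prod]
      intro j hj
      rw [Finset.mem_range] at hj
      have : 0 < r - j := by omega
      exact_mod_cast this.ne'
    rw [h1]
    congr 1
    rw [show ∏ j ∈ Finset.range n, ((r - j : ℕ) : ℝ)
        = ((∏ j ∈ Finset.range n, (r - j) : ℕ) : ℝ) by push_cast; rfl]
    congr 1
    rw [← Nat.descFactorial_eq_prod_range]
    rw [Nat.descFactorial_eq_factorial_mul_choose]
  have hLk := hLgen k hkr
  have hLp := hLgen p (by omega)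
  -- assemble
  rw [hTk, hTp, hFq0, hFqk, hLk, hLp] at hcheb
  have hkR : (0:ℝ) ≤ (k:ℝ) := by positivity
  have hfinal : (p:ℝ) * (M * Real.log ((k.factorial * ec Δ k ∅ : ℕ) : ℝ)
        - M * Real.log ((k.factorial * r.choose k : ℕ) : ℝ))
      ≤ (k:ℝ) * (M * Real.log ((p.factorial * faceCount Δ p : ℕ) : ℝ)
        - M * Real.log ((p.factorial * r.choose p : ℕ) : ℝ)) := by
    have h6 := mul_le_mul_of_nonneg_left hFqp hkR
    nlinarith [hcheb, h6]
  -- cancel M and split logs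
  have hCrk : (0:ℝ) < ((r.choose k : ℕ) : ℝ) := by
    have := Nat.choose_pos hkr
    exact_mod_cast this
  have hCrp : (0:ℝ) < ((r.choose p : ℕ) : ℝ) := by
    have := Nat.choose_pos (show p ≤ r by omega)
    exact_mod_cast this
  have hNpR : (0:ℝ) < ((faceCount Δ p : ℕ) : ℝ) := by exact_mod_cast hNp
  have hpfR : (0:ℝ) < ((p.factorial : ℕ) : ℝ) := by exact_mod_cast p.factorial_pos
  have hsplitlogs :
      Real.log ((k.factorial * ec Δ k ∅ : ℕ) : ℝ)
          - Real.log ((k.factorial * r.choose k : ℕ) : ℝ)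
        = Real.log ((ec Δ k ∅ : ℕ) : ℝ) - Real.log ((r.choose k : ℕ) : ℝ) := by
    push_cast
    rw [Real.log_mul hkfR.ne' hNR.ne', Real.log_mul hkfR.ne' hCrk.ne']
    push_cast
    ring
  have hsplitlogs2 :
      Real.log ((p.factorial * faceCount Δ p : ℕ) : ℝ)
          - Real.log ((p.factorial * r.choose p : ℕ) : ℝ)
        = Real.log ((faceCount Δ p : ℕ) : ℝ) - Real.log ((r.choose p : ℕ) : ℝ) := by
    push_cast
    rw [Real.log_mul hpfR.ne' hNpR.ne', Real.log_mul hpfR.ne' hCrp.ne']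
    push_cast
    ring
  have hfinal2 : M * ((p:ℝ) * (Real.log ((ec Δ k ∅ : ℕ) : ℝ) - Real.log ((r.choose k : ℕ) : ℝ)))
      ≤ M * ((k:ℝ) * (Real.log ((faceCount Δ p : ℕ) : ℝ) - Real.log ((r.choose p : ℕ) : ℝ))) := by
    rw [← hsplitlogs, ← hsplitlogs2]
    nlinarith [hfinal]
  exact le_of_mul_le_mul_left hfinal2 hMpos

end FRproof

theorem stmt6 {V : Type*} [DecidableEq V] (Δ : Finset (Finset V))
    (hΔ : ∀ B ∈ Δ, ∀ A ⊆ B, A ∈ Δ)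
    (hflag : IsFlag Δ)
    (r k p : ℕ) (hrk : k ≤ r) (hpk : p < k) (hp : 0 < p)
    (hbound : faceCount Δ k < (r + 1).choose k) :
    (faceCount Δ p : ℝ) ≥
      (r.choose p : ℝ) * (r.choose k : ℝ) ^ (-((p : ℝ) / (k : ℝ))) *
        (faceCount Δ k : ℝ) ^ ((p : ℝ) / (k : ℝ)) := by
  classical
  have hempty : ∅ ∈ Δ := hflag ∅ (by simp) (by simp)
  have hkpos : 0 < k := hp.trans hpk
  have hface : ∀ B ∈ Δ, B.card ≤ r := by
    intro B hB
    by_contra hbig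
    push_neg at hbig
    obtain ⟨B', hB'sub, hB'card⟩ := Finset.exists_subset_card_eq
      (show r+1 ≤ B.card by omega)
    have hB'Δ : B' ∈ Δ := hΔ B hB B' hB'sub
    have hsub : B'.powersetCard k ⊆ Δ.filter (fun s => s.card = k) := by
      intro S hS
      rw [Finset.mem_powersetCard] at hS
      rw [Finset.mem_filter]
      exact ⟨hΔ B' hB'Δ S hS.1, hS.2⟩
    have hcard := Finset.card_le_card hsub
    rw [Finset.card_powersetCard, hB'card] at hcard
    have : (r+1).choose k ≤ faceCount Δ k := hcard
    omega
  by_cases hN0 : faceCount Δ k = 0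
  · rw [hN0]
    have hq : ((p:ℝ)/(k:ℝ)) ≠ 0 := by
      have h1 : (0:ℝ) < (p:ℝ) := by exact_mod_cast hp
      have h2 : (0:ℝ) < (k:ℝ) := by exact_mod_cast hkpos
      positivity
    rw [Nat.cast_zero, Real.zero_rpow hq, mul_zero]
    positivity
  · have hN : 0 < FRproof.ec Δ k ∅ := by
      rw [FRproof.ec_empty]
      omega
    have hkey := FRproof.key hΔ hflag hface hempty hp hpk hrk hN
    rw [FRproof.ec_empty] at hkey
    have hNkR : (0:ℝ) < (faceCount Δ k : ℝ) := by
      have := Nat.pos_of_ne_zero hN0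
      exact_mod_cast this
    have hNp : 0 < faceCount Δ p := by
      have h1 : 0 < (Δ.filter (fun s => s.card = k)).card := Nat.pos_of_ne_zero hN0
      obtain ⟨K, hK⟩ := Finset.card_pos.mp h1
      rw [Finset.mem_filter] at hK
      obtain ⟨A, hAsub, hAcard⟩ := Finset.exists_subset_card_eq
        (show p ≤ K.card by omega)
      apply Finset.card_pos.mpr
      exact ⟨A, Finset.mem_filter.mpr ⟨hΔ K hK.1 A hAsub, hAcard⟩⟩
    have hNpR : (0:ℝ) < (faceCount Δ p : ℝ) := by exact_mod_cast hNp
    have hCk : (0:ℝ) < (r.choose k : ℝ) := by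
      have := Nat.choose_pos hrk
      exact_mod_cast this
    have hCp : (0:ℝ) < (r.choose p : ℝ) := by
      have := Nat.choose_pos (show p ≤ r by omega)
      exact_mod_cast this
    rw [ge_iff_le]
    set q : ℝ := (p:ℝ)/(k:ℝ) with hqdef
    have hrw : (r.choose p : ℝ) * (r.choose k : ℝ) ^ (-q) * (faceCount Δ k : ℝ) ^ q
        = Real.exp (Real.log (r.choose p : ℝ)
            + q * (Real.log (faceCount Δ k : ℝ) - Real.log (r.choose k : ℝ))) := by
      have h1 : Real.log (r.choose p : ℝ)
            + q * (Real.log (faceCount Δ k : ℝ) - Real.log (r.choose k : ℝ))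
          = Real.log (r.choose p : ℝ)
            + (Real.log (r.choose k : ℝ) * (-q) + Real.log (faceCount Δ k : ℝ) * q) := by
        ring
      rw [h1, Real.exp_add, Real.exp_add, Real.exp_log hCp,
        ← Real.rpow_def_of_pos hCk, ← Real.rpow_def_of_pos hNkR, mul_assoc]
    rw [hrw]
    have hlogle : Real.log (r.choose p : ℝ)
        + q * (Real.log (faceCount Δ k : ℝ) - Real.log (r.choose k : ℝ))
        ≤ Real.log (faceCount Δ p : ℝ) := by
      have hkR : (0:ℝ) < (k:ℝ) := by exact_mod_cast hkpos
      have h1 : q * (Real.log (faceCount Δ k : ℝ) - Real.log (r.choose k : ℝ))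
          ≤ Real.log (faceCount Δ p : ℝ) - Real.log (r.choose p : ℝ) := by
        rw [hqdef, div_mul_eq_mul_div, div_le_iff₀ hkR]
        calc (p:ℝ) * (Real.log (faceCount Δ k : ℝ) - Real.log (r.choose k : ℝ))
            ≤ (k:ℝ) * (Real.log (faceCount Δ p : ℝ) - Real.log (r.choose p : ℝ)) := hkey
          _ = (Real.log (faceCount Δ p : ℝ) - Real.log (r.choose p : ℝ)) * (k:ℝ) := by ring
      linarith
    calc Real.exp (Real.log (r.choose p : ℝ)
          + q * (Real.log (faceCount Δ k : ℝ) - Real.log (r.choose k : ℝ)))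
        ≤ Real.exp (Real.log (faceCount Δ p : ℝ)) := Real.exp_le_exp.mpr hlogle
      _ = (faceCount Δ p : ℝ) := Real.exp_log hNpR
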